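/- arXiv:2206.05103 — 4 statements merged into one kernel-verified Lean document; each statement's English description precedes it below -/
import Mathlib

section
/- For any finite sequence p of length N embedded into an L×(N−L+1) Hankel matrix H_L(p), there exists a number d ≤ ⌊(N+1)/2⌋ (depending only on p, not on L) such that for every L with 1 ≤ L ≤ N, rank H_L(p) = min(L, N−L+1, d). -/
open Polynomial

namespace Iohvidov

variable {N : ℕ}

noncomputable def Pp (p : Fin N → ℂ) : ℂ[X] := ∑ n : Fin N, C (p n) * X ^ (n : ℕ)

lemma coeff_Pp (p : Fin N → ℂ) (t : ℕ) :
    (Pp p).coeff t = if h : t < N then p ⟨t, h⟩ else 0 := by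
  rw [Pp, finset_sum_coeff]
  simp only [coeff_C_mul, coeff_X_pow, mul_ite, mul_one, mul_zero]
  split
  · next h =>
    rw [Finset.sum_eq_single (⟨t, h⟩ : Fin N)]
    · simp
    · intro b _ hb
      simp only [ite_eq_right_iff]
      intro hbt
      exact absurd (Fin.ext hbt.symm : b = ⟨t,h⟩) hb
    · simp
  · next h =>
    apply Finset.sum_eq_zero
    intro b _
    simp only [ite_eq_right_iff]
    intro hbt
    exact absurd (hbt ▸ b.isLt) h


/-- `a` has degree `< k` (coefficient form). -/
def adeg (a : ℂ[X]) (k : ℕ) : Prop := ∀ j, k ≤ j → a.coeff j = 0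

/-- the pair `g = (u,v)` has `deg u < m` and `deg v + 1 < m`. -/
def Bnd (g : ℂ[X] × ℂ[X]) (m : ℕ) : Prop :=
  (∀ j, m ≤ j → g.1.coeff j = 0) ∧ (∀ j, m ≤ j + 1 → g.2.coeff j = 0)

/-- membership in the solution module: `u * P ≡ v` in coefficients `< N`. -/
def Lam (p : Fin N → ℂ) (g : ℂ[X] × ℂ[X]) : Prop :=
  ∀ t, t < N → (g.1 * Pp p).coeff t = g.2.coeff t

/-- leading vector at level `D`. -/
def lv (g : ℂ[X] × ℂ[X]) (D : ℕ) : ℂ × ℂ := (g.1.coeff D, g.2.coeff (D - 1))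

lemma adeg_mono {a k k'} (h : adeg a k) (hk : k ≤ k') : adeg a k' :=
  fun j hj => h j (le_trans hk hj)

lemma adeg_zero (k : ℕ) : adeg (0 : ℂ[X]) k := fun j _ => rfl

lemma adeg_natDegree (a : ℂ[X]) : adeg a (a.natDegree + 1) :=
  fun j hj => a.coeff_eq_zero_of_natDegree_lt (by omega)

lemma Bnd_mono {g m m'} (h : Bnd g m) (hm : m ≤ m') : Bnd g m' :=
  ⟨fun j hj => h.1 j (by omega), fun j hj => h.2 j (by omega)⟩

lemma Bnd_zero {g} (h : Bnd g 0) : g = 0 := by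
  have h1 : g.1 = 0 := Polynomial.ext fun n => h.1 n (by omega)
  have h2 : g.2 = 0 := Polynomial.ext fun n => h.2 n (by omega)
  exact Prod.ext h1 h2

lemma Bnd_zero_pair (m : ℕ) : Bnd (0 : ℂ[X] × ℂ[X]) m := by
  constructor <;> intro j _ <;> rfl

lemma Bnd_add {g h m} (hg : Bnd g m) (hh : Bnd h m) : Bnd (g + h) m := by
  refine ⟨fun j hj => ?_, fun j hj => ?_⟩
  · simp [Prod.fst_add, coeff_add, hg.1 j hj, hh.1 j hj]
  · simp [Prod.snd_add, coeff_add, hg.2 j hj, hh.2 j hj]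

lemma Bnd_neg {g m} (hg : Bnd g m) : Bnd (-g) m := by
  refine ⟨fun j hj => ?_, fun j hj => ?_⟩
  · simp [hg.1 j hj]
  · simp [hg.2 j hj]

lemma Bnd_sub {g h m} (hg : Bnd g m) (hh : Bnd h m) : Bnd (g - h) m := by
  rw [sub_eq_add_neg]; exact Bnd_add hg (Bnd_neg hh)

lemma Lam_add {p : Fin N → ℂ} {g h} (hg : Lam p g) (hh : Lam p h) : Lam p (g + h) := by
  intro t ht
  simp [Prod.fst_add, Prod.snd_add, add_mul, coeff_add, hg t ht, hh t ht]

lemma Lam_neg {p : Fin N → ℂ} {g} (hg : Lam p g) : Lam p (-g) := by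
  intro t ht
  simp [neg_mul, hg t ht]

lemma Lam_sub {p : Fin N → ℂ} {g h} (hg : Lam p g) (hh : Lam p h) : Lam p (g - h) := by
  rw [sub_eq_add_neg]; exact Lam_add hg (Lam_neg hh)

lemma Lam_zero (p : Fin N → ℂ) : Lam p 0 := by intro t ht; simp

lemma smul_pair_fst (a : ℂ[X]) (g : ℂ[X] × ℂ[X]) : (a • g).1 = a * g.1 := rfl
lemma smul_pair_snd (a : ℂ[X]) (g : ℂ[X] × ℂ[X]) : (a • g).2 = a * g.2 := rfl

lemma Lam_psmul {p : Fin N → ℂ} {g} (hg : Lam p g) (a : ℂ[X]) : Lam p (a • g) := by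
  intro t ht
  rw [smul_pair_fst, smul_pair_snd, mul_assoc, coeff_mul, coeff_mul]
  apply Finset.sum_congr rfl
  intro x hx
  rw [Finset.HasAntidiagonal.mem_antidiagonal] at hx
  rw [hg x.2 (by omega)]

lemma Bnd_psmul {a ka g mg} (ha : adeg a ka) (hg : Bnd g mg) :
    Bnd (a • g) (ka + mg - 1) := by
  refine ⟨fun j hj => ?_, fun j hj => ?_⟩
  · rw [smul_pair_fst, coeff_mul]
    apply Finset.sum_eq_zero
    intro x hx
    rw [Finset.HasAntidiagonal.mem_antidiagonal] at hx
    by_cases hka : ka ≤ x.1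
    · rw [ha x.1 hka, zero_mul]
    · rw [hg.1 x.2 (by omega), mul_zero]
  · rw [smul_pair_snd, coeff_mul]
    apply Finset.sum_eq_zero
    intro x hx
    rw [Finset.HasAntidiagonal.mem_antidiagonal] at hx
    by_cases hka : ka ≤ x.1
    · rw [ha x.1 hka, zero_mul]
    · rw [hg.2 x.2 (by omega), mul_zero]

lemma lv_add (g h : ℂ[X] × ℂ[X]) (D : ℕ) : lv (g + h) D = lv g D + lv h D := by
  simp [lv, Prod.fst_add, Prod.snd_add]

lemma lv_sub (g h : ℂ[X] × ℂ[X]) (D : ℕ) : lv (g - h) D = lv g D - lv h D := by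
  simp [lv]

/-- `L0'`: coefficients above the bound vanish. -/
lemma lv_eq_zero {g m m'} (hg : Bnd g m) (h : m ≤ m') : lv g m' = 0 := by
  have h1 := hg.1 m' (by omega)
  have h2 := hg.2 (m' - 1) (by omega)
  simp [lv, h1, h2, Prod.ext_iff]

/-- `L1`: if the leading vector at the top level vanishes, the bound drops. -/
lemma Bnd_of_lv_eq_zero {g D} (hg : Bnd g (D + 1)) (h0 : lv g D = 0) : Bnd g D := by
  have h1 : g.1.coeff D = 0 := congrArg Prod.fst h0
  have h2 : g.2.coeff (D - 1) = 0 := congrArg Prod.snd h0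
  refine ⟨fun j hj => ?_, fun j hj => ?_⟩
  · rcases eq_or_lt_of_le hj with h | h
    · exact h ▸ h1
    · exact hg.1 j (by omega)
  · by_cases hj2 : D + 1 ≤ j + 1
    · exact hg.2 j hj2
    · have : j = D - 1 := by omega
      exact this ▸ h2

/-- `L2a`: leading vector of a scaled pair. -/
lemma lv_smul {g D a k} (hg : Bnd g (D + 1)) (ha : adeg a (k + 1)) :
    lv (a • g) (k + D) = a.coeff k • lv g D := by
  have e1 : (a * g.1).coeff (k + D) = a.coeff k * g.1.coeff D := by
    rw [coeff_mul]
    rw [Finset.sum_eq_single ((k, D) : ℕ × ℕ)]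
    · intro x hx hne
      rw [Finset.HasAntidiagonal.mem_antidiagonal] at hx
      by_cases h1 : k + 1 ≤ x.1
      · rw [ha x.1 h1, zero_mul]
      · by_cases h2 : D + 1 ≤ x.2
        · rw [hg.1 x.2 h2, mul_zero]
        · exact absurd (Prod.ext (by omega) (by omega)) hne
    · intro h
      exact absurd (Finset.HasAntidiagonal.mem_antidiagonal.2 (by simp)) h
  have e2 : (a * g.2).coeff (k + D - 1) = a.coeff k * g.2.coeff (D - 1) := by
    rcases Nat.eq_zero_or_pos D with hD | hD
    · subst hD
      have hz : g.2 = 0 := Polynomial.ext fun n => hg.2 n (by omega)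
      simp [hz]
    · rw [coeff_mul]
      rw [Finset.sum_eq_single ((k, D - 1) : ℕ × ℕ)]
      · intro x hx hne
        rw [Finset.HasAntidiagonal.mem_antidiagonal] at hx
        by_cases h1 : k + 1 ≤ x.1
        · rw [ha x.1 h1, zero_mul]
        · by_cases h2 : D + 1 ≤ x.2 + 1
          · rw [hg.2 x.2 h2, mul_zero]
          · exact absurd (Prod.ext (by omega) (by omega)) hne
      · intro h
        exact absurd (Finset.HasAntidiagonal.mem_antidiagonal.2 (by omega)) h
  simp [lv, smul_pair_fst, smul_pair_snd, e1, e2, Prod.ext_iff]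

/-- if `g` has exact level `D` (nonzero leading vector), a bound on `a • g` bounds `deg a`. -/
lemma adeg_of_smul {g D a m'} (hg : Bnd g (D + 1)) (hlv : lv g D ≠ 0)
    (hb : Bnd (a • g) m') : adeg a (m' - D) := by
  intro j hj
  by_contra hne
  have hA : a ≠ 0 := fun h => hne (by simp [h])
  have hjle : j ≤ a.natDegree := le_natDegree_of_ne_zero hne
  have hz : lv (a • g) (a.natDegree + D) = 0 := lv_eq_zero hb (by omega)
  have he : lv (a • g) (a.natDegree + D) = a.coeff a.natDegree • lv g D :=
    lv_smul hg (adeg_natDegree a)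
  rw [hz] at he
  rcases smul_eq_zero.1 he.symm with h | h
  · exact (mt leadingCoeff_eq_zero.1 hA) h
  · exact hlv h


/-- `lv_smul` in subtraction form. -/
lemma lv_smul'' {g : ℂ[X] × ℂ[X]} {D a m} (hg : Bnd g (D + 1)) (hD : D ≤ m)
    (ha : adeg a (m - D + 1)) : lv (a • g) m = a.coeff (m - D) • lv g D := by
  have h := lv_smul hg ha
  rwa [show m - D + D = m by omega] at h

attribute [local instance] Classical.propDecidable

variable (p : Fin N → ℂ)

lemma exists_level : ∃ m, ∃ g : ℂ[X] × ℂ[X], Lam p g ∧ g ≠ 0 ∧ Bnd g (m + 1) := by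
  refine ⟨N, (1, Pp p), fun t ht => by simp, ?_, fun j hj => ?_, fun j hj => ?_⟩
  · intro h
    have : (1 : ℂ[X]) = 0 := congrArg Prod.fst h
    simp at this
  · simp only [coeff_one]
    rw [if_neg (by omega)]
  · rw [coeff_Pp, dif_neg (by omega)]

noncomputable def D1 : ℕ := Nat.find (exists_level p)

noncomputable def g1 : ℂ[X] × ℂ[X] := (Nat.find_spec (exists_level p)).choose

lemma g1_spec : Lam p (g1 p) ∧ g1 p ≠ 0 ∧ Bnd (g1 p) (D1 p + 1) :=
  (Nat.find_spec (exists_level p)).choose_spec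

lemma g1_lam : Lam p (g1 p) := (g1_spec p).1
lemma g1_ne : g1 p ≠ 0 := (g1_spec p).2.1
lemma g1_bnd : Bnd (g1 p) (D1 p + 1) := (g1_spec p).2.2

lemma D1_le_N : D1 p ≤ N := Nat.find_le (by
  refine ⟨(1, Pp p), fun t ht => by simp, ?_, fun j hj => ?_, fun j hj => ?_⟩
  · intro h
    have : (1 : ℂ[X]) = 0 := congrArg Prod.fst h
    simp at this
  · simp only [coeff_one]
    rw [if_neg (by omega)]
  · rw [coeff_Pp, dif_neg (by omega)])

lemma eq_zero_of_bnd_D1 {g} (hg : Lam p g) (hb : Bnd g (D1 p)) : g = 0 := by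
  rcases Nat.eq_zero_or_pos (D1 p) with h0 | h0
  · exact Bnd_zero (by rwa [h0] at hb)
  · by_contra hne
    exact Nat.find_min (exists_level p) (show D1 p - 1 < D1 p by omega)
      ⟨g, hg, hne, by rwa [show D1 p - 1 + 1 = D1 p by omega]⟩

lemma lv1_ne : lv (g1 p) (D1 p) ≠ 0 := by
  intro h
  exact g1_ne p (eq_zero_of_bnd_D1 p (g1_lam p) (Bnd_of_lv_eq_zero (g1_bnd p) h))

lemma Pp_ne (hp : ∃ n, p n ≠ 0) : Pp p ≠ 0 := by
  obtain ⟨n, hn⟩ := hp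
  intro h
  apply hn
  have := congrArg (fun q => Polynomial.coeff q (n : ℕ)) h
  simpa [coeff_Pp, n.isLt] using this

lemma D1_pos (hp : ∃ n, p n ≠ 0) : 1 ≤ D1 p := by
  by_contra h
  have hD : D1 p = 0 := by omega
  have hb := g1_bnd p
  rw [hD] at hb
  -- second component is zero
  have hv : (g1 p).2 = 0 := Polynomial.ext fun n => hb.2 n (by omega)
  -- first component is a constant c ≠ 0
  have hu : ∀ j, 1 ≤ j → (g1 p).1.coeff j = 0 := hb.1
  set c := (g1 p).1.coeff 0 with hc
  have hcne : c ≠ 0 := by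
    intro h0
    apply g1_ne p
    refine Prod.ext (Polynomial.ext fun n => ?_) hv
    rcases Nat.eq_zero_or_pos n with rfl | hn
    · simpa [hc] using h0
    · exact hu n hn
  apply Pp_ne p hp
  apply Polynomial.ext
  intro t
  rcases lt_or_ge t N with ht | ht
  · have hlam := g1_lam p t ht
    rw [hv] at hlam
    simp only [coeff_zero] at hlam
    rw [coeff_mul] at hlam
    rw [Finset.sum_eq_single ((0, t) : ℕ × ℕ)] at hlam
    · have : c * (Pp p).coeff t = 0 := hlam
      simpa [hcne] using this
    · intro x hx hne
      rw [Finset.HasAntidiagonal.mem_antidiagonal] at hx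
      rw [hu x.1 (by
        rcases Nat.eq_zero_or_pos x.1 with h1 | h1
        · exact absurd (Prod.ext h1 (by omega)) hne
        · exact h1), zero_mul]
    · intro hmem
      exact absurd (Finset.HasAntidiagonal.mem_antidiagonal.2 (by simp)) hmem
  · rw [coeff_Pp, dif_neg (by omega), coeff_zero]

lemma exists_level2 : ∃ m, ∃ g : ℂ[X] × ℂ[X],
    Lam p g ∧ (∀ a : ℂ[X], g ≠ a • g1 p) ∧ Bnd g (m + 1) := by
  have lam1 : Lam p ((1 : ℂ[X]), Pp p) := fun t ht => by simp
  have lam2 : Lam p ((0 : ℂ[X]), (X : ℂ[X]) ^ N) := by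
    intro t ht
    simp [coeff_X_pow, Nat.ne_of_lt ht]
  have bnd1 : Bnd ((1 : ℂ[X]), Pp p) (N + 2) := by
    refine ⟨fun j hj => ?_, fun j hj => ?_⟩
    · simp only [coeff_one]; rw [if_neg (by omega)]
    · rw [coeff_Pp, dif_neg (by omega)]
  have bnd2 : Bnd ((0 : ℂ[X]), (X : ℂ[X]) ^ N) (N + 2) := by
    refine ⟨fun j hj => rfl, fun j hj => ?_⟩
    simp only [coeff_X_pow]
    rw [if_neg (by omega)]
  rcases Classical.em (∃ b : ℂ[X], ((0 : ℂ[X]), (X : ℂ[X]) ^ N) = b • g1 p) with ⟨b, hb⟩ | h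
  · refine ⟨N + 1, ((1 : ℂ[X]), Pp p), lam1, ?_, bnd1⟩
    intro a ha
    have h1 : (1 : ℂ[X]) = a * (g1 p).1 := congrArg Prod.fst ha
    have h2 : (0 : ℂ[X]) = b * (g1 p).1 := congrArg Prod.fst hb
    have h3 : (X : ℂ[X]) ^ N = b * (g1 p).2 := congrArg Prod.snd hb
    have hg1 : (g1 p).1 ≠ 0 := by
      intro h
      rw [h, mul_zero] at h1
      simp at h1
    have hb0 : b = 0 := by
      rcases mul_eq_zero.1 h2.symm with h | h
      · exact h
      · exact absurd h hg1
    rw [hb0, zero_mul] at h3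
    exact pow_ne_zero N Polynomial.X_ne_zero h3
  · push_neg at h
    exact ⟨N + 1, ((0 : ℂ[X]), (X : ℂ[X]) ^ N), lam2, h, bnd2⟩

noncomputable def D2 : ℕ := Nat.find (exists_level2 p)

noncomputable def g2 : ℂ[X] × ℂ[X] := (Nat.find_spec (exists_level2 p)).choose

lemma g2_spec : Lam p (g2 p) ∧ (∀ a : ℂ[X], g2 p ≠ a • g1 p) ∧ Bnd (g2 p) (D2 p + 1) :=
  (Nat.find_spec (exists_level2 p)).choose_spec

lemma g2_lam : Lam p (g2 p) := (g2_spec p).1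
lemma g2_nmul : ∀ a : ℂ[X], g2 p ≠ a • g1 p := (g2_spec p).2.1
lemma g2_bnd : Bnd (g2 p) (D2 p + 1) := (g2_spec p).2.2

lemma g2_ne : g2 p ≠ 0 := by
  intro h
  exact g2_nmul p 0 (by rw [h, zero_smul])

lemma D1_le_D2 : D1 p ≤ D2 p :=
  Nat.find_le ⟨g2 p, g2_lam p, g2_ne p, g2_bnd p⟩

lemma multiple_of_bnd_D2 {g} (hg : Lam p g) (hb : Bnd g (D2 p)) : ∃ a : ℂ[X], g = a • g1 p := by
  rcases Nat.eq_zero_or_pos (D2 p) with h0 | h0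
  · refine ⟨0, ?_⟩
    have hg0 : g = 0 := Bnd_zero (by rwa [h0] at hb)
    rw [hg0, zero_smul]
  · by_contra hne
    push_neg at hne
    exact Nat.find_min (exists_level2 p) (show D2 p - 1 < D2 p by omega)
      ⟨g, hg, fun a ha => hne a ha, by rwa [show D2 p - 1 + 1 = D2 p by omega]⟩

lemma lv2_ne : lv (g2 p) (D2 p) ≠ 0 := by
  intro h
  obtain ⟨a, ha⟩ := multiple_of_bnd_D2 p (g2_lam p) (Bnd_of_lv_eq_zero (g2_bnd p) h)
  exact g2_nmul p a ha

/-- Claim 1: the leading vectors of `g1` and `g2` are linearly independent. -/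
lemma Ind (c1 c2 : ℂ) (h : c1 • lv (g1 p) (D1 p) + c2 • lv (g2 p) (D2 p) = 0) :
    c1 = 0 ∧ c2 = 0 := by
  by_cases hc2 : c2 = 0
  · subst hc2
    rw [zero_smul, add_zero] at h
    rcases smul_eq_zero.1 h with h | h
    · exact ⟨h, rfl⟩
    · exact absurd h (lv1_ne p)
  · exfalso
    set k := D2 p - D1 p with hk
    set h0 : ℂ[X] × ℂ[X] := (C c2) • g2 p + (C c1 * X ^ k) • g1 p with hh0
    have hlam : Lam p h0 := Lam_add (Lam_psmul (g2_lam p) _) (Lam_psmul (g1_lam p) _)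
    have hbnd : Bnd h0 (D2 p + 1) := by
      apply Bnd_add
      · have := Bnd_psmul (a := C c2) (ka := 1) (fun j hj => by
          rw [coeff_C, if_neg (by omega)]) (g2_bnd p)
        exact Bnd_mono this (by omega)
      · have := Bnd_psmul (a := C c1 * X ^ k) (ka := k + 1) (fun j hj => by
          rw [coeff_C_mul, coeff_X_pow, if_neg (by omega), mul_zero]) (g1_bnd p)
        apply Bnd_mono this
        have := D1_le_D2 p
        omega
    have hlv : lv h0 (D2 p) = 0 := by
      have e2 : lv ((C c2) • g2 p) (D2 p) = c2 • lv (g2 p) (D2 p) := by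
        have := lv_smul'' (g2_bnd p) (le_refl (D2 p)) (a := C c2) (fun j hj => by
          rw [coeff_C, if_neg (by omega)])
        rwa [Nat.sub_self, coeff_C, if_pos rfl] at this
      have e1 : lv ((C c1 * X ^ k) • g1 p) (D2 p) = c1 • lv (g1 p) (D1 p) := by
        have := lv_smul'' (g1_bnd p) (D1_le_D2 p) (a := C c1 * X ^ k) (fun j hj => by
          rw [coeff_C_mul, coeff_X_pow, if_neg (by omega), mul_zero])
        rwa [← hk, coeff_C_mul, coeff_X_pow, if_pos rfl, mul_one] at this
      rw [hh0, lv_add, e1, e2, add_comm]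
      exact h
    have hb2 : Bnd h0 (D2 p) := Bnd_of_lv_eq_zero hbnd hlv
    obtain ⟨a, ha⟩ := multiple_of_bnd_D2 p hlam hb2
    apply g2_nmul p (C c2⁻¹ * (a - C c1 * X ^ k))
    have e : (C c2) • g2 p = (a - C c1 * X ^ k) • g1 p := by
      rw [sub_smul, ← ha, hh0]
      abel
    calc g2 p = (C c2⁻¹ * C c2) • g2 p := by
          rw [← C_mul, inv_mul_cancel₀ hc2, C_1, one_smul]
      _ = (C c2⁻¹) • ((C c2) • g2 p) := by rw [mul_smul]
      _ = (C c2⁻¹) • ((a - C c1 * X ^ k) • g1 p) := by rw [e]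
      _ = (C c2⁻¹ * (a - C c1 * X ^ k)) • g1 p := by rw [mul_smul]

/-- the leading vectors span `ℂ²`. -/
lemma combo (w : ℂ × ℂ) : ∃ α β : ℂ, w = α • lv (g1 p) (D1 p) + β • lv (g2 p) (D2 p) := by
  set x1 := (lv (g1 p) (D1 p)).1 with hx1
  set y1 := (lv (g1 p) (D1 p)).2 with hy1
  set x2 := (lv (g2 p) (D2 p)).1 with hx2
  set y2 := (lv (g2 p) (D2 p)).2 with hy2
  have hΔ : x1 * y2 - x2 * y1 ≠ 0 := by
    intro hΔ0
    by_cases hx : x1 = 0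
    · by_cases hy : y1 = 0
      · exact lv1_ne p (Prod.ext hx hy)
      · have := Ind p y2 (-y1) (by
          refine Prod.ext ?_ ?_ <;>
            simp only [Prod.fst_add, Prod.snd_add, Prod.smul_fst, Prod.smul_snd,
              smul_eq_mul, Prod.fst_zero, Prod.snd_zero, ← hx1, ← hy1, ← hx2, ← hy2]
          · linear_combination hΔ0
          · ring)
        exact hy (by simpa using this.2)
    · have := Ind p x2 (-x1) (by
        refine Prod.ext ?_ ?_ <;>
          simp only [Prod.fst_add, Prod.snd_add, Prod.smul_fst, Prod.smul_snd,
            smul_eq_mul, Prod.fst_zero, Prod.snd_zero, ← hx1, ← hy1, ← hx2, ← hy2]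
        · ring
        · linear_combination -hΔ0)
      exact hx (by simpa using this.2)
  refine ⟨(w.1 * y2 - w.2 * x2) / (x1 * y2 - x2 * y1),
          (x1 * w.2 - y1 * w.1) / (x1 * y2 - x2 * y1), ?_⟩
  refine Prod.ext ?_ ?_ <;>
    simp only [Prod.fst_add, Prod.snd_add, Prod.smul_fst, Prod.smul_snd, smul_eq_mul,
      ← hx1, ← hy1, ← hx2, ← hy2] <;>
    rw [div_mul_eq_mul_div, div_mul_eq_mul_div, ← add_div, eq_div_iff hΔ] <;> ring

/-- Claim 2: `g1, g2` are independent over `ℂ[X]`. -/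
lemma Indep {a b : ℂ[X]} (h : a • g1 p + b • g2 p = 0) : a = 0 ∧ b = 0 := by
  by_cases ha : a = 0
  · subst ha
    rw [zero_smul, zero_add] at h
    refine ⟨rfl, ?_⟩
    by_contra hb
    apply g2_ne p
    have h1 : b * (g2 p).1 = 0 := congrArg Prod.fst h
    have h2 : b * (g2 p).2 = 0 := congrArg Prod.snd h
    refine Prod.ext ?_ ?_
    · rcases mul_eq_zero.1 h1 with h | h
      · exact absurd h hb
      · exact h
    · rcases mul_eq_zero.1 h2 with h | h
      · exact absurd h hb
      · exact h
  · exfalso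
    by_cases hb : b = 0
    · subst hb
      rw [zero_smul, add_zero] at h
      apply g1_ne p
      have h1 : a * (g1 p).1 = 0 := congrArg Prod.fst h
      have h2 : a * (g1 p).2 = 0 := congrArg Prod.snd h
      refine Prod.ext ?_ ?_
      · rcases mul_eq_zero.1 h1 with h | h
        · exact absurd h ha
        · exact h
      · rcases mul_eq_zero.1 h2 with h | h
        · exact absurd h ha
        · exact h
    · set m := max (a.natDegree + D1 p) (b.natDegree + D2 p) with hm
      have hD1m : D1 p ≤ m := by omega
      have hD2m : D2 p ≤ m := by omega
      have e1 : lv (a • g1 p) m = a.coeff (m - D1 p) • lv (g1 p) (D1 p) :=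
        lv_smul'' (g1_bnd p) hD1m (fun j hj => coeff_eq_zero_of_natDegree_lt (by omega))
      have e2 : lv (b • g2 p) m = b.coeff (m - D2 p) • lv (g2 p) (D2 p) :=
        lv_smul'' (g2_bnd p) hD2m (fun j hj => coeff_eq_zero_of_natDegree_lt (by omega))
      have hz : lv (a • g1 p + b • g2 p) m = 0 := by rw [h]; simp [lv]
      rw [lv_add, e1, e2] at hz
      have := Ind p _ _ hz
      rcases le_total (a.natDegree + D1 p) (b.natDegree + D2 p) with hc | hc
      · have hmb : m = b.natDegree + D2 p := by omega
        have : b.coeff b.natDegree = 0 := by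
          have h2 := this.2
          rwa [hmb, Nat.add_sub_cancel] at h2
        exact hb (leadingCoeff_eq_zero.1 this)
      · have hma : m = a.natDegree + D1 p := by omega
        have : a.coeff a.natDegree = 0 := by
          have h1 := this.1
          rwa [hma, Nat.add_sub_cancel] at h1
        exact ha (leadingCoeff_eq_zero.1 this)



lemma adeg_CX {α : ℂ} {k : ℕ} : adeg (C α * X ^ k) (k + 1) := fun j hj => by
  rw [coeff_C_mul, coeff_X_pow, if_neg (by omega), mul_zero]

lemma coeff_CX {α : ℂ} {k : ℕ} : (C α * X ^ k).coeff k = α := by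
  rw [coeff_C_mul, coeff_X_pow, if_pos rfl, mul_one]

/-- Claim 3: every bounded element of the module is a combination of `g1, g2`
with predictable degrees. -/
lemma Span : ∀ m, ∀ g : ℂ[X] × ℂ[X], Lam p g → Bnd g m →
    ∃ a b : ℂ[X], adeg a (m - D1 p) ∧ adeg b (m - D2 p) ∧ g = a • g1 p + b • g2 p := by
  intro m
  induction m with
  | zero =>
    intro g _ hb
    exact ⟨0, 0, adeg_zero _, adeg_zero _, by rw [Bnd_zero hb, zero_smul, zero_smul, add_zero]⟩
  | succ m IH =>
    intro g hlam hb
    by_cases hm1 : m + 1 ≤ D1 p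
    · have hg0 : g = 0 := eq_zero_of_bnd_D1 p hlam (Bnd_mono hb hm1)
      exact ⟨0, 0, adeg_zero _, adeg_zero _, by rw [hg0, zero_smul, zero_smul, add_zero]⟩
    · have hD1m : D1 p ≤ m := by omega
      obtain ⟨α, β, hw⟩ := combo p (lv g m)
      by_cases hm2 : m + 1 ≤ D2 p
      -- middle region : must have β = 0
      · have hβ : β = 0 := by
          by_contra hβ
          set h' := g - (C α * X ^ (m - D1 p)) • g1 p with hh'
          have hlam' : Lam p h' := Lam_sub hlam (Lam_psmul (g1_lam p) _)
          have hbnd' : Bnd h' (m + 1) := by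
            apply Bnd_sub hb
            exact Bnd_mono (Bnd_psmul (adeg_CX (α := α) (k := m - D1 p)) (g1_bnd p)) (by omega)
          have hlv' : lv h' m = β • lv (g2 p) (D2 p) := by
            rw [hh', lv_sub, lv_smul'' (g1_bnd p) hD1m
              adeg_CX, coeff_CX, hw]
            abel
          obtain ⟨a', ha'⟩ := multiple_of_bnd_D2 p hlam' (Bnd_mono hbnd' hm2)
          have hadeg' : adeg a' (m + 1 - D1 p) :=
            adeg_of_smul (g1_bnd p) (lv1_ne p) (ha' ▸ hbnd')
          have hlv'' : lv h' m = a'.coeff (m - D1 p) • lv (g1 p) (D1 p) := by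
            rw [ha']
            exact lv_smul'' (g1_bnd p) hD1m
              (by rwa [show m - D1 p + 1 = m + 1 - D1 p by omega])
          have : a'.coeff (m - D1 p) • lv (g1 p) (D1 p) + (-β) • lv (g2 p) (D2 p) = 0 := by
            rw [← hlv'', hlv', neg_smul]
            abel
          exact hβ (by simpa using (Ind p _ _ this).2)
        set h' := g - (C α * X ^ (m - D1 p)) • g1 p with hh'
        have hlam' : Lam p h' := Lam_sub hlam (Lam_psmul (g1_lam p) _)
        have hbnd' : Bnd h' (m + 1) := by
          apply Bnd_sub hb
          exact Bnd_mono (Bnd_psmul (adeg_CX (α := α) (k := m - D1 p)) (g1_bnd p)) (by omega)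
        have hlv' : lv h' m = 0 := by
          rw [hh', lv_sub, lv_smul'' (g1_bnd p) hD1m
            adeg_CX, coeff_CX, hw,
            hβ, zero_smul, add_zero]
          abel
        obtain ⟨a, b, hadg, hbdg, heq⟩ := IH h' hlam' (Bnd_of_lv_eq_zero hbnd' hlv')
        refine ⟨a + C α * X ^ (m - D1 p), b, ?_, adeg_mono hbdg (by omega), ?_⟩
        · intro j hj
          rw [coeff_add, hadg j (by omega), coeff_C_mul, coeff_X_pow,
            if_neg (by omega), mul_zero, add_zero]
        · have hg : g = h' + (C α * X ^ (m - D1 p)) • g1 p := by rw [hh']; abel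
          rw [hg, heq, add_smul]
          abel
      -- lower region : subtract both leading contributions
      · have hD2m : D2 p ≤ m := by omega
        set h' := g - (C α * X ^ (m - D1 p)) • g1 p - (C β * X ^ (m - D2 p)) • g2 p with hh'
        have hlam' : Lam p h' :=
          Lam_sub (Lam_sub hlam (Lam_psmul (g1_lam p) _)) (Lam_psmul (g2_lam p) _)
        have hbnd' : Bnd h' (m + 1) := by
          apply Bnd_sub
          apply Bnd_sub hb
          · exact Bnd_mono (Bnd_psmul (adeg_CX (α := α) (k := m - D1 p)) (g1_bnd p)) (by omega)
          · exact Bnd_mono (Bnd_psmul (adeg_CX (α := β) (k := m - D2 p)) (g2_bnd p)) (by omega)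
        have hlv' : lv h' m = 0 := by
          rw [hh', lv_sub, lv_sub,
            lv_smul'' (g1_bnd p) hD1m
              adeg_CX,
            lv_smul'' (g2_bnd p) hD2m
              adeg_CX,
            coeff_CX, coeff_CX, hw]
          abel
        obtain ⟨a, b, hadg, hbdg, heq⟩ := IH h' hlam' (Bnd_of_lv_eq_zero hbnd' hlv')
        refine ⟨a + C α * X ^ (m - D1 p), b + C β * X ^ (m - D2 p), ?_, ?_, ?_⟩
        · intro j hj
          rw [coeff_add, hadg j (by omega), coeff_C_mul, coeff_X_pow,
            if_neg (by omega), mul_zero, add_zero]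
        · intro j hj
          rw [coeff_add, hbdg j (by omega), coeff_C_mul, coeff_X_pow,
            if_neg (by omega), mul_zero, add_zero]
        · rw [add_smul, add_smul]
          have : g = h' + (C α * X ^ (m - D1 p)) • g1 p + (C β * X ^ (m - D2 p)) • g2 p := by
            rw [hh']; abel
          rw [this, heq]
          abel

/-! ### The matrix bridge -/

end Iohvidov

/-- The `L × K` Hankel matrix of a sequence `p` of length `N`, where `L + K = N + 1`:
entry `(i,j)` is `p (i + j)` (0-indexed, i.e. `p_{i+j-1}` in 1-indexed notation). -/
def hankel {α : Type*} {N : ℕ} (L K : ℕ) (h : L + K = N + 1) (p : Fin N → α) :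
    Matrix (Fin L) (Fin K) α :=
  Matrix.of fun i j => p ⟨i.val + j.val, by have hi := i.isLt; have hj := j.isLt; omega⟩

namespace Iohvidov

variable {N : ℕ} (p : Fin N → ℂ) {L K : ℕ} (hLK : L + K = N + 1)

lemma coeff_mul_Pp {u : ℂ[X]} {K : ℕ} (hu : adeg u K) {t : ℕ} (ht : K ≤ t + 1) :
    (u * Pp p).coeff t = ∑ j ∈ Finset.range K, u.coeff (K - 1 - j) * (Pp p).coeff (t - (K - 1 - j)) := by
  rw [coeff_mul, Finset.Nat.sum_antidiagonal_eq_sum_range_succ_mk]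
  rw [← Finset.sum_subset (Finset.range_subset_range.2 ht)]
  · exact (Finset.sum_range_reflect (fun a => u.coeff a * (Pp p).coeff (t - a)) K).symm
  · intro x hx1 hx2
    rw [Finset.mem_range] at hx2
    rw [hu x (by omega), zero_mul]

/-- value of the Hankel matrix on the reversed coefficient vector of `g.1`. -/
lemma mulVec_phi (g : ℂ[X] × ℂ[X]) (hu : adeg g.1 K) (i : Fin L) :
    (hankel L K hLK p).mulVec (fun j : Fin K => g.1.coeff (K - 1 - j.val)) i
      = (g.1 * Pp p).coeff (i.val + (K - 1)) := by
  have hi := i.isLt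
  rw [coeff_mul_Pp p hu (by omega)]
  rw [← Fin.sum_univ_eq_sum_range
    (fun j => g.1.coeff (K - 1 - j) * (Pp p).coeff (i.val + (K - 1) - (K - 1 - j))) K]
  show ∑ j : Fin K, (hankel L K hLK p) i j * g.1.coeff (K - 1 - j.val) = _
  apply Finset.sum_congr rfl
  intro j _
  have hj := j.isLt
  have harg : i.val + (K - 1) - (K - 1 - j.val) = i.val + j.val := by omega
  rw [harg, hankel, Matrix.of_apply, coeff_Pp, dif_pos (by omega), mul_comm]

lemma phi_mem_ker (hK : 1 ≤ K) (g : ℂ[X] × ℂ[X]) (hlam : Lam p g) (hbnd : Bnd g K) :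
    (hankel L K hLK p).mulVecLin (fun j : Fin K => g.1.coeff (K - 1 - j.val)) = 0 := by
  rw [Matrix.mulVecLin_apply]
  funext i
  rw [mulVec_phi p hLK g hbnd.1 i]
  have hi := i.isLt
  have ht : i.val + (K - 1) < N := by omega
  rw [hlam _ ht]
  rw [hbnd.2 (i.val + (K - 1)) (by omega)]
  rfl

lemma ker_to_pair (q : Fin K → ℂ) (hL : 1 ≤ L) (hK : 1 ≤ K)
    (hq : (hankel L K hLK p).mulVecLin q = 0) :
    ∃ g : ℂ[X] × ℂ[X], Lam p g ∧ Bnd g K ∧ ∀ j : Fin K, g.1.coeff (K - 1 - j.val) = q j := by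
  set u : ℂ[X] := ∑ j : Fin K, C (q j) * X ^ (K - 1 - j.val) with hu
  have hcu : ∀ j : Fin K, u.coeff (K - 1 - j.val) = q j := by
    intro j
    rw [hu, finset_sum_coeff]
    rw [Finset.sum_eq_single j]
    · rw [coeff_C_mul, coeff_X_pow, if_pos rfl, mul_one]
    · intro b _ hbj
      rw [coeff_C_mul, coeff_X_pow, if_neg ?_, mul_zero]
      have hb := b.isLt
      have hj := j.isLt
      intro hcontra
      exact hbj (Fin.ext (by omega))
    · intro h
      exact absurd (Finset.mem_univ j) h
  have hadeg : adeg u K := by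
    intro s hs
    rw [hu, finset_sum_coeff]
    apply Finset.sum_eq_zero
    intro b _
    rw [coeff_C_mul, coeff_X_pow, if_neg (by have := b.isLt; omega), mul_zero]
  set v : ℂ[X] := ∑ t ∈ Finset.range (K - 1), C ((u * Pp p).coeff t) * X ^ t with hv
  have hcv : ∀ s, v.coeff s = if s < K - 1 then (u * Pp p).coeff s else 0 := by
    intro s
    rw [hv, finset_sum_coeff]
    split
    · next hs =>
      rw [Finset.sum_eq_single s]
      · rw [coeff_C_mul, coeff_X_pow, if_pos rfl, mul_one]
      · intro b _ hbs
        rw [coeff_C_mul, coeff_X_pow, if_neg (fun hc => hbs hc.symm), mul_zero]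
      · intro h
        exact absurd (Finset.mem_range.2 hs) h
    · next hs =>
      apply Finset.sum_eq_zero
      intro b hb
      rw [Finset.mem_range] at hb
      rw [coeff_C_mul, coeff_X_pow, if_neg (by omega), mul_zero]
  have hqval : (fun j : Fin K => u.coeff (K - 1 - j.val)) = q := funext hcu
  refine ⟨(u, v), ?_, ⟨hadeg, fun s hs => by rw [hcv, if_neg (by omega)]⟩, hcu⟩
  intro t ht
  show (u * Pp p).coeff t = v.coeff t
  rcases lt_or_ge t (K - 1) with htK | htK
  · rw [hcv, if_pos htK]
  · rw [hcv, if_neg (by omega)]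
    set i : Fin L := ⟨t - (K - 1), by omega⟩ with hi
    have := congrFun hq i
    rw [Matrix.mulVecLin_apply] at this
    rw [← hqval] at this
    rw [mulVec_phi p hLK (u, v) hadeg i] at this
    have harg : i.val + (K - 1) = t := by
      rw [hi]; simp; omega
    rw [harg] at this
    exact this

lemma adeg_of_degreeLT {a : ℂ[X]} {n : ℕ} (ha : a ∈ degreeLT ℂ n) : adeg a n := by
  rw [mem_degreeLT] at ha
  intro j hj
  exact coeff_eq_zero_of_degree_lt (lt_of_lt_of_le ha (by exact_mod_cast hj))

lemma degreeLT_of_adeg {a : ℂ[X]} {n : ℕ} (ha : adeg a n) : a ∈ degreeLT ℂ n := by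
  rw [mem_degreeLT]
  exact (degree_lt_iff_coeff_zero a n).2 fun m hm => ha m hm

lemma adeg_eq_zero {a : ℂ[X]} (ha : adeg a 0) : a = 0 :=
  Polynomial.ext fun n => ha n (Nat.zero_le n)

lemma Bnd_psmul' {a : ℂ[X]} {g : ℂ[X] × ℂ[X]} {D K : ℕ}
    (ha : adeg a (K - D)) (hg : Bnd g (D + 1)) : Bnd (a • g) K := by
  by_cases hDK : D ≤ K
  · exact Bnd_mono (Bnd_psmul ha hg) (by omega)
  · have ha0 : a = 0 := adeg_eq_zero (by rwa [show K - D = 0 by omega] at ha)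
    rw [ha0, zero_smul]
    exact Bnd_zero_pair K

lemma pair_eq_zero (hK : 1 ≤ K) (hKN : K ≤ N) {g : ℂ[X] × ℂ[X]} (hlam : Lam p g) (hbnd : Bnd g K)
    (h0 : ∀ j : Fin K, g.1.coeff (K - 1 - j.val) = 0) : g = 0 := by
  have hu : g.1 = 0 := by
    apply Polynomial.ext
    intro s
    rcases lt_or_ge s K with hs | hs
    · have := h0 ⟨K - 1 - s, by omega⟩
      rwa [show K - 1 - (K - 1 - s) = s by omega] at this
    · exact hbnd.1 s hs
  have hv : g.2 = 0 := by
    apply Polynomial.ext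
    intro t
    rw [coeff_zero]
    rcases lt_or_ge t N with ht | ht
    · rw [← hlam t ht, hu, zero_mul, coeff_zero]
    · exact hbnd.2 t (by omega)
  calc g = (g.1, g.2) := rfl
    _ = 0 := by rw [hu, hv]; rfl

/-- the parametrization of the kernel. -/
noncomputable def Phi : (degreeLT ℂ (K - D1 p) × degreeLT ℂ (K - D2 p)) →ₗ[ℂ] (Fin K → ℂ) where
  toFun ab := fun j => ((ab.1.val * (g1 p).1 + ab.2.val * (g2 p).1)).coeff (K - 1 - j.val)
  map_add' x y := by
    funext j
    simp only [Submodule.coe_add, Prod.fst_add, Prod.snd_add, Pi.add_apply]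
    rw [← coeff_add]
    congr 1
    ring
  map_smul' c x := by
    funext j
    simp only [Submodule.coe_smul, Prod.smul_fst, Prod.smul_snd, Pi.smul_apply,
      RingHom.id_apply, smul_eq_mul]
    rw [Polynomial.smul_eq_C_mul, Polynomial.smul_eq_C_mul, mul_assoc, mul_assoc,
      ← mul_add, ← Polynomial.smul_eq_C_mul, coeff_smul, smul_eq_mul]

lemma Phi_eq (ab) (j : Fin K) :
    Phi p ab j = ((ab.1.val • g1 p + ab.2.val • g2 p).1).coeff (K - 1 - j.val) := rfl

lemma gpair_lam (ab : degreeLT ℂ (K - D1 p) × degreeLT ℂ (K - D2 p)) :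
    Lam p (ab.1.val • g1 p + ab.2.val • g2 p) :=
  Lam_add (Lam_psmul (g1_lam p) _) (Lam_psmul (g2_lam p) _)

lemma gpair_bnd (ab : degreeLT ℂ (K - D1 p) × degreeLT ℂ (K - D2 p)) :
    Bnd (ab.1.val • g1 p + ab.2.val • g2 p) K :=
  Bnd_add (Bnd_psmul' (adeg_of_degreeLT ab.1.2) (g1_bnd p))
    (Bnd_psmul' (adeg_of_degreeLT ab.2.2) (g2_bnd p))

lemma Phi_inj (hK : 1 ≤ K) (hKN : K ≤ N) : Function.Injective (Phi p (K := K)) := by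
  rw [← LinearMap.ker_eq_bot, Submodule.eq_bot_iff]
  intro ab hab
  rw [LinearMap.mem_ker] at hab
  have h0 : ∀ j : Fin K, ((ab.1.val • g1 p + ab.2.val • g2 p).1).coeff (K - 1 - j.val) = 0 :=
    fun j => by rw [← Phi_eq p ab j, hab]; rfl
  have hz : ab.1.val • g1 p + ab.2.val • g2 p = 0 :=
    pair_eq_zero p hK hKN (gpair_lam p ab) (gpair_bnd p ab) h0
  obtain ⟨h1, h2⟩ := Indep p hz
  exact Prod.ext (Subtype.ext h1) (Subtype.ext h2)

lemma Phi_range (hL : 1 ≤ L) (hK : 1 ≤ K) :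
    LinearMap.range (Phi p (K := K)) = LinearMap.ker (hankel L K hLK p).mulVecLin := by
  apply le_antisymm
  · rintro q ⟨ab, rfl⟩
    rw [LinearMap.mem_ker]
    have := phi_mem_ker p hLK hK _ (gpair_lam p ab) (gpair_bnd p ab)
    rw [← this]
    rfl
  · intro q hq
    rw [LinearMap.mem_ker] at hq
    obtain ⟨g, hlam, hbnd, hval⟩ := ker_to_pair p hLK q hL hK hq
    obtain ⟨a, b, hadg, hbdg, heq⟩ := Span p K g hlam hbnd
    refine ⟨(⟨a, degreeLT_of_adeg hadg⟩, ⟨b, degreeLT_of_adeg hbdg⟩), ?_⟩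
    funext j
    rw [Phi_eq]
    simp only [← heq]
    exact hval j

lemma finrank_degreeLT (n : ℕ) : Module.finrank ℂ (degreeLT ℂ n) = n := by
  rw [(degreeLTEquiv ℂ n).finrank_eq, Module.finrank_fin_fun]

/-- The central rank formula. -/
lemma rank_eq (hL : 1 ≤ L) (hK : 1 ≤ K) :
    (hankel L K hLK p).rank = K - ((K - D1 p) + (K - D2 p)) := by
  have hKN : K ≤ N := by omega
  haveI i1 : Module.Finite ℂ (degreeLT ℂ (K - D1 p)) :=
    Module.Finite.equiv (degreeLTEquiv ℂ (K - D1 p)).symm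
  haveI i2 : Module.Finite ℂ (degreeLT ℂ (K - D2 p)) :=
    Module.Finite.equiv (degreeLTEquiv ℂ (K - D2 p)).symm
  have hdom : Module.finrank ℂ (degreeLT ℂ (K - D1 p) × degreeLT ℂ (K - D2 p))
      = (K - D1 p) + (K - D2 p) := by
    rw [Module.finrank_prod, finrank_degreeLT, finrank_degreeLT]
  have hker : Module.finrank ℂ (LinearMap.ker (hankel L K hLK p).mulVecLin)
      = (K - D1 p) + (K - D2 p) := by
    rw [← Phi_range p hLK hL hK, LinearMap.finrank_range_of_inj (Phi_inj p hK hKN), hdom]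
  have hrn := LinearMap.finrank_range_add_finrank_ker (hankel L K hLK p).mulVecLin
  rw [hker, Module.finrank_fin_fun] at hrn
  have hrank : (hankel L K hLK p).rank
      = Module.finrank ℂ (LinearMap.range (hankel L K hLK p).mulVecLin) := rfl
  omega

/-- rank of the single-row Hankel matrix is `1` when `p ≠ 0`. -/
lemma rank_row (hp : ∃ n, p n ≠ 0) (h1N : 1 + N = N + 1) :
    (hankel 1 N h1N p).rank = 1 := by
  obtain ⟨n, hn⟩ := hp
  have hle : (hankel 1 N h1N p).rank ≤ 1 := by
    have := Matrix.rank_le_card_height (hankel 1 N h1N p)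
    simpa using this
  have hne : (hankel 1 N h1N p).rank ≠ 0 := by
    intro h0
    have hrank : (hankel 1 N h1N p).rank
        = Module.finrank ℂ (LinearMap.range (hankel 1 N h1N p).mulVecLin) := rfl
    rw [hrank] at h0
    rw [Submodule.finrank_eq_zero] at h0
    have hmem : (hankel 1 N h1N p).mulVecLin (Pi.single n 1)
        ∈ LinearMap.range (hankel 1 N h1N p).mulVecLin := LinearMap.mem_range_self _ _
    rw [h0, Submodule.mem_bot] at hmem
    have := congrFun hmem 0
    rw [Matrix.mulVecLin_apply, Matrix.mulVec_single] at this
    apply hn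
    have harg : (hankel 1 N h1N p) 0 n = p n := by
      show p ⟨0 + n.val, _⟩ = p n
      congr 1
      exact Fin.ext (by simp)
    have h2 : (hankel 1 N h1N p) 0 n * 1 = (0 : ℂ) := this
    rw [harg, mul_one] at h2
    exact h2
  omega

/-- the key degree equation, obtained from the rank of the one-row Hankel matrix. -/
lemma key_eq (hp : ∃ n, p n ≠ 0) (hN : 1 ≤ N) :
    (N - D1 p) + (N - D2 p) = N - 1 := by
  have h1N : 1 + N = N + 1 := by omega
  have h1 := rank_eq p h1N le_rfl hN
  have h2 := rank_row p hp h1N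
  omega

end Iohvidov

open Iohvidov in
/-- For any finite complex sequence `p` of length `N ≥ 1`, there exists `d ≤ ⌊(N+1)/2⌋`
(depending only on `p`) such that for every window length `L` with `1 ≤ L ≤ N`,
`rank H_L(p) = min (L, N − L + 1, d)`. -/
theorem hankel_rank_plateau (N : ℕ) (hN : 1 ≤ N) (p : Fin N → ℂ) :
    ∃ d : ℕ, d ≤ (N + 1) / 2 ∧
      ∀ (L : ℕ), 1 ≤ L → ∀ (hL : L ≤ N),
        (hankel L (N + 1 - L) (by omega) p).rank = min (min L (N + 1 - L)) d := by
  by_cases hp : ∃ n, p n ≠ 0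
  · have h1 : 1 ≤ D1 p := D1_pos p hp
    have h2 : D1 p ≤ D2 p := D1_le_D2 p
    have h3 : D1 p ≤ N := D1_le_N p
    have h4 : (N - D1 p) + (N - D2 p) = N - 1 := key_eq p hp hN
    refine ⟨D1 p, by omega, ?_⟩
    intro L hL1 hLN
    have hrk := rank_eq p (L := L) (K := N + 1 - L) (by omega) hL1 (by omega)
    rw [hrk]
    omega
  · push_neg at hp
    refine ⟨0, by omega, ?_⟩
    intro L hL1 hLN
    have hm : hankel L (N + 1 - L) (by omega) p = 0 := by
      ext i j
      show p _ = 0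
      exact hp _
    rw [hm, Matrix.rank_zero]
    omega
end

section
/- (Eckart–Young–Mirsky for Frobenius norm) Let A ∈ ℝ^{L×K} with singular value decomposition A = UΣVᵀ, singular values σ_1 ≥ ⋯ ≥ σ_{min(L,K)}. Let A^{(r)} = UΣ^{(r)}Vᵀ where Σ^{(r)} keeps only the top r singular values. Then for every matrix B with rank B ≤ r, ‖A − A^{(r)}‖_F ≤ ‖A − B‖_F. -/
open Matrix

/-- The Frobenius norm of a real matrix. -/
noncomputable def frob {L K : ℕ} (X : Matrix (Fin L) (Fin K) ℝ) : ℝ :=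
  Real.sqrt (∑ i, ∑ j, X i j ^ 2)


/-- sum of squares of entries -/
noncomputable def ssq {L K : ℕ} (X : Matrix (Fin L) (Fin K) ℝ) : ℝ := ∑ i, ∑ j, X i j ^ 2

lemma ssq_nonneg {L K : ℕ} (X : Matrix (Fin L) (Fin K) ℝ) : 0 ≤ ssq X := by
  apply Finset.sum_nonneg; intro i _; apply Finset.sum_nonneg; intro j _; positivity

lemma ssq_eq_trace {L K : ℕ} (X : Matrix (Fin L) (Fin K) ℝ) : ssq X = (Xᵀ * X).trace := by
  rw [Matrix.trace, ssq, Finset.sum_comm]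
  congr 1; ext j
  simp [Matrix.mul_apply, Matrix.diag, pow_two]

lemma ssq_mul_left {L K : ℕ} (U : Matrix (Fin L) (Fin L) ℝ) (hU : Uᵀ * U = 1)
    (X : Matrix (Fin L) (Fin K) ℝ) : ssq (U * X) = ssq X := by
  rw [ssq_eq_trace, ssq_eq_trace, Matrix.transpose_mul, Matrix.mul_assoc,
    ← Matrix.mul_assoc Uᵀ U X, hU, Matrix.one_mul]

lemma ssq_mul_right {L K : ℕ} (V : Matrix (Fin K) (Fin K) ℝ) (hV : V * Vᵀ = 1)
    (X : Matrix (Fin L) (Fin K) ℝ) : ssq (X * Vᵀ) = ssq X := by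
  rw [ssq_eq_trace, ssq_eq_trace, Matrix.transpose_mul, Matrix.transpose_transpose]
  rw [Matrix.trace_mul_comm, Matrix.mul_assoc,
    show Vᵀ * (V * Xᵀ) = Xᵀ by rw [← Matrix.mul_assoc, mul_eq_one_comm.mp hV, Matrix.one_mul],
    Matrix.trace_mul_comm]

/-- contraction: multiplying by a matrix with orthonormal columns does not increase ssq -/
lemma ssq_mul_le {L K m : ℕ} (C : Matrix (Fin L) (Fin K) ℝ) (W : Matrix (Fin K) (Fin m) ℝ)
    (hW : Wᵀ * W = 1) : ssq (C * W) ≤ ssq C := by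
  set P : Matrix (Fin K) (Fin K) ℝ := W * Wᵀ with hPdef
  have hP : P * P = P := by
    rw [hPdef, Matrix.mul_assoc, ← Matrix.mul_assoc Wᵀ W Wᵀ, hW, Matrix.one_mul]
  have hPt : Pᵀ = P := by rw [hPdef, Matrix.transpose_mul, Matrix.transpose_transpose]
  have e1 : ssq (C * W) = (Cᵀ * C * P).trace := by
    rw [ssq_eq_trace, Matrix.transpose_mul, Matrix.mul_assoc Wᵀ Cᵀ (C * W),
      Matrix.trace_mul_comm]
    simp only [Matrix.mul_assoc, hPdef]
  have e2 : ssq (C * (1 - P)) = (Cᵀ * C).trace - (Cᵀ * C * P).trace := by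
    rw [ssq_eq_trace, Matrix.transpose_mul]
    have hexp : (1 - P)ᵀ * Cᵀ * (C * (1 - P))
        = Cᵀ * C - Cᵀ * (C * P) - P * (Cᵀ * C) + P * (Cᵀ * (C * P)) := by
      rw [Matrix.transpose_sub, Matrix.transpose_one, hPt]
      simp only [Matrix.sub_mul, Matrix.mul_sub, Matrix.one_mul, Matrix.mul_one,
        Matrix.mul_assoc]
      abel
    rw [hexp]
    have t1 : (P * (Cᵀ * C)).trace = (Cᵀ * C * P).trace := by
      rw [Matrix.trace_mul_comm, Matrix.mul_assoc]
    have t2 : (P * (Cᵀ * (C * P))).trace = (Cᵀ * C * P).trace := by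
      rw [Matrix.trace_mul_comm]
      rw [show Cᵀ * (C * P) * P = Cᵀ * C * (P * P) by simp only [Matrix.mul_assoc]]
      rw [hP, Matrix.mul_assoc]
    rw [Matrix.trace_add, Matrix.trace_sub, Matrix.trace_sub, t1, t2]
    rw [show Cᵀ * (C * P) = Cᵀ * C * P by simp only [Matrix.mul_assoc]]
    ring
  have e0 : ssq C = (Cᵀ * C).trace := ssq_eq_trace C
  linarith [ssq_nonneg (C * (1 - P))]

/-- sum over Fin L of an indicator at n -/
lemma sum_fin_ite {L : ℕ} (n : ℕ) (f : ℕ → ℝ) :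
    ∑ i : Fin L, (if (i : ℕ) = n then f (i : ℕ) else 0) = if n < L then f n else 0 := by
  rw [Fin.sum_univ_eq_sum_range (fun i => if i = n then f i else 0) L]
  rw [Finset.sum_ite_eq' (Finset.range L) n f]
  simp

lemma card_indicator_sum {K r : ℕ} :
    ∑ k : Fin K, (if r ≤ (k : ℕ) then (1 : ℝ) else 0) = ((K - r : ℕ) : ℝ) := by
  rw [Fin.sum_univ_eq_sum_range (fun n => if r ≤ n then (1 : ℝ) else 0) K]
  rw [Finset.sum_boole]
  have : (Finset.range K).filter (fun n => r ≤ n) = Finset.Ico r K := by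
    ext n; simp [Finset.mem_Ico, Finset.mem_range]; omega
  rw [this, Nat.card_Ico]

lemma sum_weight_ge {K r : ℕ} (hrK : r < K) (lam : Fin K → ℝ)
    (hmono : ∀ i j : Fin K, (i : ℕ) ≤ (j : ℕ) → lam j ≤ lam i)
    (hnn : ∀ i, 0 ≤ lam i)
    (p : Fin K → ℝ) (hp0 : ∀ k, 0 ≤ p k) (hp1 : ∀ k, p k ≤ 1)
    (hps : ∑ k, p k = ((K - r : ℕ) : ℝ)) :
    ∑ k : Fin K, (if r ≤ (k : ℕ) then lam k else 0) ≤ ∑ k, lam k * p k := by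
  set t := lam ⟨r, hrK⟩ with ht
  have h1 : ∀ k : Fin K, t * (if r ≤ (k : ℕ) then p k - 1 else p k)
      ≤ lam k * p k - (if r ≤ (k : ℕ) then lam k else 0) := by
    intro k; by_cases h : r ≤ (k : ℕ)
    · simp only [if_pos h]
      nlinarith [hmono ⟨r, hrK⟩ k h, hp1 k]
    · simp only [if_neg h]
      nlinarith [hmono k ⟨r, hrK⟩ (le_of_lt (not_le.mp h)), hp0 k]
  have h2 : ∑ k : Fin K, (if r ≤ (k : ℕ) then p k - 1 else p k) = 0 := by
    have : ∀ k : Fin K, (if r ≤ (k : ℕ) then p k - 1 else p k)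
        = p k - (if r ≤ (k : ℕ) then (1 : ℝ) else 0) := by
      intro k; split_ifs <;> ring
    rw [Finset.sum_congr rfl (fun k _ => this k), Finset.sum_sub_distrib, hps,
      card_indicator_sum]
    ring
  have h3 : (0 : ℝ) ≤ ∑ k : Fin K, (lam k * p k - (if r ≤ (k : ℕ) then lam k else 0)) := by
    have := Finset.sum_le_sum (s := Finset.univ) (fun k _ => h1 k)
    rw [← Finset.mul_sum, h2, mul_zero] at this
    exact this
  rw [Finset.sum_sub_distrib] at h3
  linarith

lemma exists_orthonormal_kernel {L K r : ℕ} (B : Matrix (Fin L) (Fin K) ℝ)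
    (hB : B.rank ≤ r) :
    ∃ W : Matrix (Fin K) (Fin (K - r)) ℝ, Wᵀ * W = 1 ∧ B * W = 0 := by
  classical
  set e : EuclideanSpace ℝ (Fin K) ≃ₗ[ℝ] (Fin K → ℝ) := WithLp.linearEquiv 2 ℝ (Fin K → ℝ)
  set ml : EuclideanSpace ℝ (Fin K) →ₗ[ℝ] (Fin L → ℝ) := B.mulVecLin.comp e.toLinearMap with hml
  have hrange : LinearMap.range ml = LinearMap.range B.mulVecLin :=
    LinearMap.range_comp_of_range_eq_top _ e.range
  have hdim : K - r ≤ Module.finrank ℝ (LinearMap.ker ml) := by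
    have h1 := LinearMap.finrank_range_add_finrank_ker ml
    rw [finrank_euclideanSpace_fin, hrange] at h1
    have h2 : Module.finrank ℝ (LinearMap.range B.mulVecLin) = B.rank := rfl
    omega
  set S := LinearMap.ker ml with hS
  set b := stdOrthonormalBasis ℝ S with hb
  have hle : K - r ≤ Module.finrank ℝ S := hdim
  set w : Fin (K - r) → (Fin K → ℝ) := fun j => e ((b (Fin.castLE hle j) : S) : EuclideanSpace ℝ (Fin K)) with hw
  refine ⟨Matrix.of fun k j => w j k, ?_, ?_⟩
  · ext i j
    have horth := b.orthonormal
    rw [orthonormal_iff_ite] at horth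
    have := horth (Fin.castLE hle i) (Fin.castLE hle j)
    rw [Submodule.coe_inner] at this
    have hinner : (inner ℝ ((b (Fin.castLE hle i) : S) : EuclideanSpace ℝ (Fin K))
        ((b (Fin.castLE hle j) : S) : EuclideanSpace ℝ (Fin K)) : ℝ)
        = ∑ k, w i k * w j k := by
      rw [PiLp.inner_apply]
      simp only [Real.inner_apply]
      rfl
    rw [hinner] at this
    simp only [Matrix.mul_apply, Matrix.transpose_apply, Matrix.of_apply]
    rw [this, Matrix.one_apply]
    congr 1
    simp [Fin.castLE_inj]
  · ext i j
    have hker : ml ((b (Fin.castLE hle j) : S) : EuclideanSpace ℝ (Fin K)) = 0 := by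
      have := (b (Fin.castLE hle j)).2
      rwa [LinearMap.mem_ker] at this
    have : B.mulVec (w j) = 0 := hker
    simp only [Matrix.mul_apply, Matrix.of_apply, Matrix.zero_apply]
    calc ∑ k, B i k * w j k = B.mulVec (w j) i := rfl
    _ = 0 := by rw [this]; rfl

lemma sum_fin_tr {L K : ℕ} (c : ℕ → ℝ) :
    ∑ i : Fin L, (if (i : ℕ) < K then c (i : ℕ) else 0)
      = ∑ k : Fin K, (if (k : ℕ) < L then c (k : ℕ) else 0) := by
  rw [Fin.sum_univ_eq_sum_range (fun n => if n < K then c n else 0) L,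
    Fin.sum_univ_eq_sum_range (fun n => if n < L then c n else 0) K]
  have h1 : ∑ n ∈ Finset.range L, (if n < K then c n else 0)
      = ∑ n ∈ Finset.range (min L K), c n := by
    rw [← Finset.sum_subset (Finset.range_subset_range.mpr (min_le_left L K))]
    · exact Finset.sum_congr rfl (fun n hn => by
        rw [Finset.mem_range] at hn; rw [if_pos (by omega)])
    · intro n hn hn'
      rw [Finset.mem_range] at hn; rw [Finset.mem_range] at hn'
      rw [if_neg (by omega)]
  have h2 : ∑ n ∈ Finset.range K, (if n < L then c n else 0)
      = ∑ n ∈ Finset.range (min L K), c n := by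
    rw [← Finset.sum_subset (Finset.range_subset_range.mpr (min_le_right L K))]
    · exact Finset.sum_congr rfl (fun n hn => by
        rw [Finset.mem_range] at hn; rw [if_pos (by omega)])
    · intro n hn hn'
      rw [Finset.mem_range] at hn; rw [Finset.mem_range] at hn'
      rw [if_neg (by omega)]
  rw [h1, h2]

theorem eckart_young_mirsky_frobenius' (L K r : ℕ) (A : Matrix (Fin L) (Fin K) ℝ)
    (U : Matrix (Fin L) (Fin L) ℝ) (V : Matrix (Fin K) (Fin K) ℝ)
    (hU : Uᵀ * U = 1) (hV : Vᵀ * V = 1)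
    (σ : ℕ → ℝ) (hmono : Antitone σ) (hnonneg : ∀ i, 0 ≤ σ i)
    (hA : A = U * (Matrix.of fun (i : Fin L) (j : Fin K) =>
      if (i : ℕ) = (j : ℕ) then σ (i : ℕ) else 0) * Vᵀ)
    (B : Matrix (Fin L) (Fin K) ℝ) (hB : B.rank ≤ r) :
    Real.sqrt (ssq (A - U * (Matrix.of fun (i : Fin L) (j : Fin K) =>
        if (i : ℕ) = (j : ℕ) ∧ (i : ℕ) < r then σ (i : ℕ) else 0) * Vᵀ)) ≤
      Real.sqrt (ssq (A - B)) := by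
  classical
  have hVV : V * Vᵀ = 1 := mul_eq_one_comm.mp hV
  set Sg : Matrix (Fin L) (Fin K) ℝ := Matrix.of fun i j =>
    if (i : ℕ) = (j : ℕ) then σ (i : ℕ) else 0 with hSg
  set T : Matrix (Fin L) (Fin K) ℝ := Matrix.of fun i j =>
    if (i : ℕ) = (j : ℕ) ∧ (i : ℕ) < r then σ (i : ℕ) else 0 with hT
  set E : Matrix (Fin L) (Fin K) ℝ := Matrix.of fun i j =>
    if (i : ℕ) = (j : ℕ) ∧ r ≤ (i : ℕ) then σ (i : ℕ) else 0 with hE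
  set lam : Fin K → ℝ := fun k => if (k : ℕ) < L then σ (k : ℕ) ^ 2 else 0 with hlam
  -- Step 1: the residual is U * E * Vᵀ
  have step1 : A - U * T * Vᵀ = U * E * Vᵀ := by
    rw [hA, ← Matrix.sub_mul, ← Matrix.mul_sub]
    have : Sg - T = E := by
      ext i j
      simp only [Matrix.sub_apply, Matrix.of_apply, hSg, hT, hE]
      split_ifs <;> (try (exfalso; omega)) <;> ring
    rw [this]
  -- Step 2: ssq of the residual
  have step2 : ssq (U * E * Vᵀ) = ∑ k : Fin K, (if r ≤ (k : ℕ) then lam k else 0) := by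
    rw [ssq_mul_right V hVV, ssq_mul_left U hU]
    have hrow : ∀ i : Fin L, ∑ j : Fin K, E i j ^ 2
        = if (i : ℕ) < K then (if r ≤ (i : ℕ) then σ (i : ℕ) ^ 2 else 0) else 0 := by
      intro i
      have : ∀ j : Fin K, E i j ^ 2
          = if (j : ℕ) = (i : ℕ) then (if r ≤ (j : ℕ) then σ (j : ℕ) ^ 2 else 0) else 0 := by
        intro j
        simp only [hE, Matrix.of_apply]
        by_cases h : (i : ℕ) = (j : ℕ)
        · rw [h]
          simp only [eq_self_iff_true, true_and, if_true]
          split_ifs <;> ring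
        · rw [if_neg (fun hc => h hc.1), if_neg (fun hc => h hc.symm)]
          ring
      rw [Finset.sum_congr rfl (fun j _ => this j)]
      exact sum_fin_ite (i : ℕ) (fun n => if r ≤ n then σ n ^ 2 else 0)
    show (∑ i : Fin L, ∑ j : Fin K, E i j ^ 2) = _
    rw [Finset.sum_congr rfl (fun i _ => hrow i)]
    rw [sum_fin_tr (L := L) (K := K) (fun n => if r ≤ n then σ n ^ 2 else 0)]
    apply Finset.sum_congr rfl
    intro k _
    simp only [hlam]
    split_ifs <;> (try (exfalso; omega)) <;> ring
  -- Step 3: AᵀA = V * diagonal lam * Vᵀ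
  have step3 : Aᵀ * A = V * Matrix.diagonal lam * Vᵀ := by
    rw [hA]
    rw [Matrix.transpose_mul, Matrix.transpose_mul, Matrix.transpose_transpose]
    have hSS : Sgᵀ * Sg = Matrix.diagonal lam := by
      ext j j'
      rw [Matrix.mul_apply]
      have : ∀ i : Fin L, Sgᵀ j i * Sg i j'
          = if (i : ℕ) = (j : ℕ) then
              (if (i : ℕ) = (j' : ℕ) then σ (i : ℕ) ^ 2 else 0) else 0 := by
        intro i
        simp only [hSg, Matrix.transpose_apply, Matrix.of_apply]
        split_ifs <;> (try (exfalso; omega)) <;> ring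
      rw [Finset.sum_congr rfl (fun i _ => this i)]
      rw [sum_fin_ite (j : ℕ) (fun n => if n = (j' : ℕ) then σ n ^ 2 else 0)]
      rw [Matrix.diagonal_apply]
      simp only [hlam]
      by_cases hjj : j = j'
      · subst hjj
        split_ifs <;> (try (exfalso; omega)) <;> rfl
      · have hne : (j : ℕ) ≠ (j' : ℕ) := fun h => hjj (Fin.ext h)
        split_ifs <;> (try (exfalso; omega)) <;> rfl
    calc V * (Sgᵀ * Uᵀ) * (U * Sg * Vᵀ)
        = V * (Sgᵀ * (Uᵀ * U * (Sg * Vᵀ))) := by simp only [Matrix.mul_assoc]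
      _ = V * (Sgᵀ * Sg * Vᵀ) := by rw [hU, Matrix.one_mul, Matrix.mul_assoc]
      _ = V * Matrix.diagonal lam * Vᵀ := by rw [hSS, Matrix.mul_assoc]
  -- Step 4: orthonormal kernel vectors
  obtain ⟨W, hWW, hBW⟩ := exists_orthonormal_kernel B hB
  set G : Matrix (Fin K) (Fin (K - r)) ℝ := Vᵀ * W with hG
  have hGG : Gᵀ * G = 1 := by
    rw [hG, Matrix.transpose_mul, Matrix.transpose_transpose, Matrix.mul_assoc,
      ← Matrix.mul_assoc V Vᵀ W, hVV, Matrix.one_mul, hWW]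
  set p : Fin K → ℝ := fun k => ∑ j, G k j ^ 2 with hp
  have hp0 : ∀ k, 0 ≤ p k := fun k => Finset.sum_nonneg fun j _ => sq_nonneg _
  have hps : ∑ k, p k = ((K - r : ℕ) : ℝ) := by
    rw [hp, Finset.sum_comm]
    have hcol : ∀ j : Fin (K - r), ∑ k, G k j ^ 2 = (Gᵀ * G) j j := by
      intro j
      rw [Matrix.mul_apply]
      exact Finset.sum_congr rfl fun k _ => by rw [Matrix.transpose_apply]; ring
    rw [Finset.sum_congr rfl (fun j _ => hcol j), hGG]
    simp [Matrix.one_apply_eq]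
  have hp1 : ∀ k, p k ≤ 1 := by
    intro k
    set P : Matrix (Fin K) (Fin K) ℝ := G * Gᵀ with hPd
    have hPP : P * P = P := by
      rw [hPd, Matrix.mul_assoc, ← Matrix.mul_assoc Gᵀ G Gᵀ, hGG, Matrix.one_mul]
    have hPsym : ∀ a b, P a b = P b a := by
      intro a b
      rw [hPd, Matrix.mul_apply, Matrix.mul_apply]
      exact Finset.sum_congr rfl fun t _ => by
        rw [Matrix.transpose_apply, Matrix.transpose_apply]; ring
    have hpk : p k = P k k := by
      rw [hp, hPd, Matrix.mul_apply]
      exact Finset.sum_congr rfl fun j _ => by rw [Matrix.transpose_apply]; ring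
    have h1 : P k k = ∑ t, P k t ^ 2 := by
      conv_lhs => rw [← hPP]
      rw [Matrix.mul_apply]
      exact Finset.sum_congr rfl fun t _ => by rw [hPsym t k]; ring
    have h2 : P k k ^ 2 ≤ ∑ t, P k t ^ 2 :=
      Finset.single_le_sum (f := fun t => P k t ^ 2) (fun t _ => sq_nonneg _)
        (Finset.mem_univ k)
    nlinarith [hp0 k]
  -- Step 5: weighted sum equals ssq (A * W)
  have hws : ∑ k, lam k * p k = ssq (A * W) := by
    have hAW : (A * W)ᵀ * (A * W) = Gᵀ * (Matrix.diagonal lam * G) := by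
      rw [Matrix.transpose_mul]
      calc Wᵀ * Aᵀ * (A * W) = Wᵀ * (Aᵀ * A) * W := by simp only [Matrix.mul_assoc]
        _ = Wᵀ * (V * Matrix.diagonal lam * Vᵀ) * W := by rw [step3]
        _ = Gᵀ * (Matrix.diagonal lam * G) := by
            rw [hG, Matrix.transpose_mul, Matrix.transpose_transpose]
            simp only [Matrix.mul_assoc]
    rw [ssq_eq_trace, hAW, Matrix.trace]
    have hdiag : ∀ j, (Gᵀ * (Matrix.diagonal lam * G)).diag j = ∑ k, lam k * G k j ^ 2 := by
      intro j
      rw [Matrix.diag_apply, Matrix.mul_apply]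
      exact Finset.sum_congr rfl fun k _ => by
        rw [Matrix.transpose_apply, Matrix.diagonal_mul]; ring
    rw [Finset.sum_congr rfl (fun j _ => hdiag j), Finset.sum_comm]
    exact Finset.sum_congr rfl fun k _ => by rw [hp, Finset.mul_sum]
  -- Step 6: conclude
  have hBW0 : (A - B) * W = A * W := by rw [Matrix.sub_mul, hBW, sub_zero]
  have main : ssq (A - U * T * Vᵀ) ≤ ssq (A - B) := by
    rw [step1, step2]
    by_cases hrK : r < K
    · have hmonoK : ∀ i j : Fin K, (i : ℕ) ≤ (j : ℕ) → lam j ≤ lam i := by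
        intro i j hij
        simp only [hlam]
        split_ifs with h1 h2
        · exact pow_le_pow_left₀ (hnonneg _) (hmono hij) 2
        · exfalso; omega
        · positivity
        · exact le_refl 0
      have hnnK : ∀ k, 0 ≤ lam k := by
        intro k; simp only [hlam]; split_ifs
        · positivity
        · exact le_refl 0
      calc ∑ k : Fin K, (if r ≤ (k : ℕ) then lam k else 0)
          ≤ ∑ k, lam k * p k := sum_weight_ge hrK lam hmonoK hnnK p hp0 hp1 hps
        _ = ssq (A * W) := hws
        _ = ssq ((A - B) * W) := by rw [hBW0]
        _ ≤ ssq (A - B) := ssq_mul_le (A - B) W hWW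
    · have hz : ∀ k : Fin K, ¬ (r ≤ (k : ℕ)) := by
        intro k; have := k.isLt; omega
      rw [Finset.sum_congr rfl (fun k _ => if_neg (hz k))]
      rw [Finset.sum_const, smul_zero]
      exact ssq_nonneg _
  exact Real.sqrt_le_sqrt main

/-- Eckart–Young–Mirsky theorem for the Frobenius norm: if `A = U Σ Vᵀ` is a singular
value decomposition (with `U, V` orthogonal and `σ` nonincreasing and nonnegative), then
the truncation `A^{(r)} = U Σ^{(r)} Vᵀ` keeping the top `r` singular values satisfies
`‖A − A^{(r)}‖_F ≤ ‖A − B‖_F` for every matrix `B` of rank at most `r`. -/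
theorem eckart_young_mirsky_frobenius (L K r : ℕ) (A : Matrix (Fin L) (Fin K) ℝ)
    (U : Matrix (Fin L) (Fin L) ℝ) (V : Matrix (Fin K) (Fin K) ℝ)
    (hU : Uᵀ * U = 1) (hV : Vᵀ * V = 1)
    (σ : ℕ → ℝ) (hmono : Antitone σ) (hnonneg : ∀ i, 0 ≤ σ i)
    (hA : A = U * (Matrix.of fun (i : Fin L) (j : Fin K) =>
      if (i : ℕ) = (j : ℕ) then σ (i : ℕ) else 0) * Vᵀ)
    (B : Matrix (Fin L) (Fin K) ℝ) (hB : B.rank ≤ r) :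
    frob (A - U * (Matrix.of fun (i : Fin L) (j : Fin K) =>
        if (i : ℕ) = (j : ℕ) ∧ (i : ℕ) < r then σ (i : ℕ) else 0) * Vᵀ) ≤
      frob (A - B) := by
  exact eckart_young_mirsky_frobenius' L K r A U V hU hV σ hmono hnonneg hA B hB
end

section
/- (Weighted Eckart–Young) Let A ∈ ℝ^{L×K}, and Q, R symmetric positive definite of sizes L×L and K×K. Let Q^{1/2}AR^{1/2} = UΣVᵀ be an SVD and set A^{(r)}_{Q,R} = Q^{−1/2} U Σ^{(r)} Vᵀ R^{−1/2}. Then for every B with rank B ≤ r, ‖A − A^{(r)}_{Q,R}‖_{Q,R} ≤ ‖A − B‖_{Q,R}. -/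
open Matrix

section Aux

variable {L K d m n : ℕ}

/-- trace of a Gram matrix is the sum of squares of entries. -/
lemma wey_trace_gram (X : Matrix (Fin m) (Fin n) ℝ) :
    trace (X * Xᵀ) = ∑ i, ∑ j, (X i j)^2 := by
  simp [Matrix.trace, Matrix.mul_apply, Matrix.diag, sq]

lemma wey_trace_gram_nonneg (X : Matrix (Fin m) (Fin n) ℝ) :
    0 ≤ trace (X * Xᵀ) := by
  rw [wey_trace_gram]; positivity

lemma wey_gram_diag_nonneg (X : Matrix (Fin m) (Fin n) ℝ) (i : Fin m) :
    0 ≤ (X * Xᵀ) i i := by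
  simp only [Matrix.mul_apply, Matrix.transpose_apply]
  exact Finset.sum_nonneg fun j _ => mul_self_nonneg _

/-- sum over `Fin L` of an `ite (· < r)` equals a range sum, when `r ≤ L`. -/
lemma wey_sum_fin_ite (f : ℕ → ℝ) {r : ℕ} (h : r ≤ L) :
    ∑ i : Fin L, (if (i : ℕ) < r then f i else 0) = ∑ i ∈ Finset.range r, f i := by
  rw [Fin.sum_univ_eq_sum_range (fun i => if i < r then f i else 0) L,
    ← Finset.sum_filter]
  congr 1
  ext x
  simp only [Finset.mem_filter, Finset.mem_range]
  omega

/-- The rearrangement bound: if `a` is antitone nonneg vanishing past `L` and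
`0 ≤ g ≤ 1` with `∑ g ≤ r`, then `∑ a g ≤ ∑_{i<r} a`. -/
lemma wey_rearrange (L r : ℕ) (a : ℕ → ℝ) (ha : Antitone a) (ha0 : ∀ i, 0 ≤ a i)
    (haL : ∀ i, L ≤ i → a i = 0) (g : Fin L → ℝ)
    (hg0 : ∀ i, 0 ≤ g i) (hg1 : ∀ i, g i ≤ 1) (hgs : ∑ i, g i ≤ (r : ℝ)) :
    ∑ i : Fin L, a i * g i ≤ ∑ i : Fin L, (if (i : ℕ) < r then a i else 0) := by
  by_cases hrL : r ≤ L
  · have key : ∀ i : Fin L,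
        a i * g i ≤ (if (i : ℕ) < r then a i - a r else 0) + a r * g i := by
      intro i
      have : a i * g i = (a i - a r) * g i + a r * g i := by ring
      rw [this]
      gcongr ?_ + _
      by_cases h : (i : ℕ) < r
      · simp only [if_pos h]
        have h1 : 0 ≤ a i - a r := sub_nonneg.mpr (ha h.le)
        calc (a i - a r) * g i ≤ (a i - a r) * 1 := by
              exact mul_le_mul_of_nonneg_left (hg1 i) h1
          _ = a i - a r := mul_one _
      · simp only [if_neg h]
        have h1 : a i - a r ≤ 0 := sub_nonpos.mpr (ha (not_lt.mp h))
        exact mul_nonpos_of_nonpos_of_nonneg h1 (hg0 i)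
    calc ∑ i : Fin L, a i * g i
        ≤ ∑ i : Fin L, ((if (i : ℕ) < r then a i - a r else 0) + a r * g i) :=
          Finset.sum_le_sum fun i _ => key i
      _ = ∑ i : Fin L, (if (i : ℕ) < r then a i - a r else 0) + a r * ∑ i, g i := by
          rw [Finset.sum_add_distrib, Finset.mul_sum]
      _ ≤ ∑ i : Fin L, (if (i : ℕ) < r then a i - a r else 0) + a r * r := by
          gcongr
          exact ha0 r
      _ = ∑ i : Fin L, (if (i : ℕ) < r then a i else 0) := by
          rw [wey_sum_fin_ite (fun n => a n - a r) hrL, wey_sum_fin_ite a hrL,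
            Finset.sum_sub_distrib, Finset.sum_const, Finset.card_range, nsmul_eq_mul]
          ring
  · push_neg at hrL
    have hLr : L ≤ r := hrL.le
    calc ∑ i : Fin L, a i * g i ≤ ∑ i : Fin L, a i := by
          apply Finset.sum_le_sum
          intro i _
          calc a i * g i ≤ a i * 1 := mul_le_mul_of_nonneg_left (hg1 i) (ha0 i)
            _ = a i := mul_one _
      _ = ∑ i : Fin L, (if (i : ℕ) < r then a i else 0) := by
          apply Finset.sum_congr rfl
          intro i _
          rw [if_pos (lt_of_lt_of_le i.isLt hLr)]

/-- Orthogonal invariance of the Gram trace. -/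
lemma wey_trace_conj (U : Matrix (Fin L) (Fin L) ℝ) (V : Matrix (Fin K) (Fin K) ℝ)
    (hU : Uᵀ * U = 1) (hV : Vᵀ * V = 1) (N : Matrix (Fin L) (Fin K) ℝ) :
    trace ((U * N * Vᵀ) * (U * N * Vᵀ)ᵀ) = trace (N * Nᵀ) := by
  have h1 : (U * N * Vᵀ) * (U * N * Vᵀ)ᵀ = U * (N * Nᵀ) * Uᵀ := by
    rw [Matrix.transpose_mul, Matrix.transpose_mul, Matrix.transpose_transpose]
    simp only [Matrix.mul_assoc]
    rw [← Matrix.mul_assoc Vᵀ V, hV, Matrix.one_mul]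
  rw [h1, Matrix.trace_mul_comm, ← Matrix.mul_assoc, hU, Matrix.one_mul]

lemma wey_trace_sandwich {p : ℕ} (E : Matrix (Fin p) (Fin L) ℝ) (D : Matrix (Fin L) (Fin K) ℝ) :
    trace ((E * D) * (E * D)ᵀ) = trace (D * Dᵀ * (Eᵀ * E)) := by
  rw [Matrix.transpose_mul, Matrix.trace_mul_cycle, Matrix.trace_mul_cycle]
  simp only [← Matrix.mul_assoc]

lemma wey_sum_diag (K : ℕ) (c : ℝ) (i : ℕ) :
    ∑ j : Fin K, (if i = (j : ℕ) then c else 0) = if i < K then c else 0 := by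
  rw [Fin.sum_univ_eq_sum_range (fun j => if i = j then c else 0) K,
    Finset.sum_ite_eq (Finset.range K) i (fun _ => c)]
  simp

end Aux

section Core

/-- The key Eckart–Young inequality for the Frobenius norm:
if `M = U Σ Vᵀ` and `rank C ≤ r` then `∑_{i ≥ r} σ i ^2 ≤ ‖M - C‖²`. -/
lemma wey_core (L K r : ℕ) (σ : ℕ → ℝ) (hmono : Antitone σ) (hnonneg : ∀ i, 0 ≤ σ i)
    (U : Matrix (Fin L) (Fin L) ℝ) (V : Matrix (Fin K) (Fin K) ℝ)
    (hU : Uᵀ * U = 1) (hV : Vᵀ * V = 1)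
    (C : Matrix (Fin L) (Fin K) ℝ) (hC : C.rank ≤ r) :
    ∑ i : Fin L, (if (i : ℕ) < K ∧ ¬ (i : ℕ) < r then σ (i : ℕ)^2 else 0) ≤
      trace ((U * (Matrix.of fun (i : Fin L) (j : Fin K) =>
        if (i : ℕ) = (j : ℕ) then σ (i : ℕ) else 0) * Vᵀ - C) *
        (U * (Matrix.of fun (i : Fin L) (j : Fin K) =>
        if (i : ℕ) = (j : ℕ) then σ (i : ℕ) else 0) * Vᵀ - C)ᵀ) := by
  classical
  set Sig : Matrix (Fin L) (Fin K) ℝ := Matrix.of fun (i : Fin L) (j : Fin K) =>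
    if (i : ℕ) = (j : ℕ) then σ (i : ℕ) else 0 with hSig
  set M : Matrix (Fin L) (Fin K) ℝ := U * Sig * Vᵀ with hM
  -- orthogonal complements of U, V
  have hUU : U * Uᵀ = 1 := mul_eq_one_comm.mp hU
  have hVV : V * Vᵀ = 1 := mul_eq_one_comm.mp hV
  -- column space of C as a submodule of Euclidean space
  let e : (Fin L → ℝ) ≃ₗ[ℝ] EuclideanSpace ℝ (Fin L) :=
    (WithLp.linearEquiv 2 ℝ (Fin L → ℝ)).symm
  let W0 : Submodule ℝ (Fin L → ℝ) := LinearMap.range C.mulVecLin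
  let W' : Submodule ℝ (EuclideanSpace ℝ (Fin L)) := W0.map (e : (Fin L → ℝ) →ₗ[ℝ] EuclideanSpace ℝ (Fin L))
  let d : ℕ := Module.finrank ℝ W'
  have hd : d ≤ r := by
    have : Module.finrank ℝ W' = Module.finrank ℝ W0 := LinearEquiv.finrank_map_eq e W0
    show Module.finrank ℝ W' ≤ r
    rw [this]; exact hC
  let b : OrthonormalBasis (Fin d) ℝ W' := stdOrthonormalBasis ℝ W'
  let W : Matrix (Fin L) (Fin d) ℝ := Matrix.of fun i j => (b j : EuclideanSpace ℝ (Fin L)) i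
  have hinner : ∀ u v : EuclideanSpace ℝ (Fin L), (inner ℝ u v : ℝ) = ∑ i, u i * v i := by
    intro u v
    simp [PiLp.inner_apply, RCLike.inner_apply, mul_comm]
  -- W has orthonormal columns
  have hW : Wᵀ * W = 1 := by
    ext j k
    rw [Matrix.mul_apply]
    have := orthonormal_iff_ite.mp b.orthonormal j k
    rw [Submodule.coe_inner, hinner] at this
    simp only [Matrix.transpose_apply, Matrix.one_apply, W, Matrix.of_apply]
    rw [← this]
  set P : Matrix (Fin L) (Fin L) ℝ := W * Wᵀ with hPdef
  have hPsymm : Pᵀ = P := by rw [hPdef, Matrix.transpose_mul, Matrix.transpose_transpose]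
  have hPP : P * P = P := by
    rw [hPdef, Matrix.mul_assoc, ← Matrix.mul_assoc Wᵀ, hW, Matrix.one_mul]
  -- P fixes columns of C
  have hPC : P * C = C := by
    ext i j
    -- the j-th column of C, as an element of W'
    have hmem : e (C.mulVecLin (Pi.single j 1)) ∈ W' :=
      Submodule.mem_map_of_mem (LinearMap.mem_range_self _ _)
    set x : W' := ⟨e (C.mulVecLin (Pi.single j 1)), hmem⟩ with hx
    have hxval : ∀ k, (x : EuclideanSpace ℝ (Fin L)) k = C k j := by
      intro k
      show (C.mulVecLin (Pi.single j 1)) k = C k j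
      simp [Matrix.mulVecLin_apply, Matrix.mulVec_single]
    have hexp := b.sum_repr' x
    have h0 : (∑ m, (inner ℝ ((b m : EuclideanSpace ℝ (Fin L))) ((x : EuclideanSpace ℝ (Fin L))) : ℝ)
        • ((b m : EuclideanSpace ℝ (Fin L)))) = (x : EuclideanSpace ℝ (Fin L)) := by
      have h1 := congrArg Subtype.val hexp
      simpa [Submodule.coe_inner] using h1
    have hexp2 : ∑ m, (inner ℝ ((b m : EuclideanSpace ℝ (Fin L))) ((x : EuclideanSpace ℝ (Fin L))) : ℝ)
        * (b m : EuclideanSpace ℝ (Fin L)) i = C i j := by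
      calc ∑ m, (inner ℝ ((b m : EuclideanSpace ℝ (Fin L))) ((x : EuclideanSpace ℝ (Fin L))) : ℝ)
            * (b m : EuclideanSpace ℝ (Fin L)) i
          = (∑ m, (inner ℝ ((b m : EuclideanSpace ℝ (Fin L))) ((x : EuclideanSpace ℝ (Fin L))) : ℝ)
            • ((b m : EuclideanSpace ℝ (Fin L)))) i :=
            by rw [WithLp.ofLp_sum, Finset.sum_apply]; simp
        _ = (x : EuclideanSpace ℝ (Fin L)) i := congrArg (fun f : EuclideanSpace ℝ (Fin L) => f i) h0
        _ = C i j := hxval i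
    rw [Matrix.mul_apply]
    calc ∑ k, P i k * C k j
        = ∑ k, (∑ m, W i m * W k m) * C k j := by
          apply Finset.sum_congr rfl; intro k _
          rw [hPdef, Matrix.mul_apply]; simp [Matrix.transpose_apply]
      _ = ∑ m, (∑ k, (b m : EuclideanSpace ℝ (Fin L)) k * C k j) * (b m : EuclideanSpace ℝ (Fin L)) i := by
          simp_rw [Finset.sum_mul]
          rw [Finset.sum_comm]
          apply Finset.sum_congr rfl; intro m _
          apply Finset.sum_congr rfl; intro k _
          simp only [W, Matrix.of_apply]; ring
      _ = C i j := by
          rw [← hexp2]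
          apply Finset.sum_congr rfl; intro m _
          rw [hinner]
          congr 1
          apply Finset.sum_congr rfl; intro k _
          rw [hxval k]
  -- trace of P
  have htrP : trace P = (d : ℝ) := by
    rw [hPdef, Matrix.trace_mul_comm, hW, Matrix.trace_one]
    simp
  -- the diagonal weights
  set aN : ℕ → ℝ := fun i => if i < L ∧ i < K then σ i ^ 2 else 0 with haN
  have haN_anti : Antitone aN := by
    intro i j hij
    simp only [aN]
    split_ifs with h1 h2
    · exact pow_le_pow_left₀ (hnonneg j) (hmono hij) 2
    · omega
    · positivity
    · exact le_refl 0
  have haN0 : ∀ i, 0 ≤ aN i := by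
    intro i; simp only [aN]; split_ifs
    · positivity
    · exact le_refl 0
  have haNL : ∀ i, L ≤ i → aN i = 0 := by
    intro i hi; simp only [aN, if_neg (by omega : ¬ (i < L ∧ i < K))]
  -- the Gram matrix of the interaction
  set Y : Matrix (Fin L) (Fin d) ℝ := Uᵀ * W with hY
  set g : Fin L → ℝ := fun i => ∑ m, (Y i m)^2 with hg
  have hYY : ∀ i : Fin L, (Y * Yᵀ) i i = g i := by
    intro i
    rw [Matrix.mul_apply]
    apply Finset.sum_congr rfl; intro m _
    simp [Matrix.transpose_apply, sq]
  have hg0 : ∀ i, 0 ≤ g i := by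
    intro i; apply Finset.sum_nonneg; intro m _; positivity
  have hg1 : ∀ i, g i ≤ 1 := by
    intro i
    have hZ : (Uᵀ * (1 - P)) * (Uᵀ * (1 - P))ᵀ = 1 - Y * Yᵀ := by
      rw [Matrix.transpose_mul, Matrix.transpose_sub, Matrix.transpose_one, hPsymm,
        Matrix.transpose_transpose]
      have h1P : (1 - P) * (1 - P) = 1 - P := by
        rw [Matrix.mul_sub, Matrix.mul_one, Matrix.sub_mul, Matrix.one_mul, hPP]
        abel
      calc Uᵀ * (1 - P) * ((1 - P) * U) = Uᵀ * ((1 - P) * (1 - P)) * U := by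
            simp only [Matrix.mul_assoc]
        _ = Uᵀ * (1 - P) * U := by rw [h1P]
        _ = Uᵀ * U - Uᵀ * P * U := by
            rw [Matrix.mul_sub, Matrix.mul_one, Matrix.sub_mul]
        _ = 1 - Y * Yᵀ := by
            rw [hU, hY, Matrix.transpose_mul, Matrix.transpose_transpose, hPdef]
            simp only [Matrix.mul_assoc]
    have hnn := wey_gram_diag_nonneg (Uᵀ * (1 - P)) i
    rw [hZ, Matrix.sub_apply, Matrix.one_apply_eq, hYY i] at hnn
    linarith
  have hgs : ∑ i, g i ≤ (r : ℝ) := by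
    have h1 : ∑ i, g i = trace (Y * Yᵀ) := by
      rw [wey_trace_gram]
    have h2 : trace (Y * Yᵀ) = (d : ℝ) := by
      rw [Matrix.trace_mul_comm, hY, Matrix.transpose_mul, Matrix.transpose_transpose]
      have : Wᵀ * U * (Uᵀ * W) = 1 := by
        calc Wᵀ * U * (Uᵀ * W) = Wᵀ * (U * Uᵀ) * W := by simp only [Matrix.mul_assoc]
          _ = 1 := by rw [hUU, Matrix.mul_one, hW]
      rw [this, Matrix.trace_one]
      simp
    rw [h1, h2]
    exact_mod_cast hd
  -- trace identities
  have htrMM : trace (M * Mᵀ) = ∑ i : Fin L, aN i := by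
    rw [hM, wey_trace_conj U V hU hV Sig, wey_trace_gram]
    apply Finset.sum_congr rfl; intro i _
    have : ∀ j : Fin K, (Sig i j)^2 = if (i : ℕ) = (j : ℕ) then σ (i : ℕ)^2 else 0 := by
      intro j
      simp only [Sig, Matrix.of_apply]
      split_ifs <;> simp
    rw [Finset.sum_congr rfl (fun j _ => this j), wey_sum_diag K (σ (i : ℕ)^2) (i : ℕ)]
    simp only [aN, i.isLt, true_and]
  have hSigSig : ∀ i k : Fin L, (Sig * Sigᵀ) i k = if i = k then aN (i : ℕ) else 0 := by
    intro i k
    rw [Matrix.mul_apply]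
    by_cases hik : i = k
    · subst hik
      rw [if_pos rfl]
      have : ∀ j : Fin K, Sig i j * Sigᵀ j i = if (i : ℕ) = (j : ℕ) then σ (i : ℕ)^2 else 0 := by
        intro j
        simp only [Sig, Matrix.transpose_apply, Matrix.of_apply]
        split_ifs <;> ring
      rw [Finset.sum_congr rfl (fun j _ => this j), wey_sum_diag K (σ (i : ℕ)^2) (i : ℕ)]
      simp only [aN, i.isLt, true_and]
    · rw [if_neg hik]
      apply Finset.sum_eq_zero
      intro j _
      simp only [Sig, Matrix.transpose_apply, Matrix.of_apply]
      split_ifs with h1 h2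
      · exact absurd (Fin.ext (h1.trans h2.symm)) hik
      all_goals ring
  have hMMt : M * Mᵀ = U * (Sig * Sigᵀ) * Uᵀ := by
    rw [hM, Matrix.transpose_mul, Matrix.transpose_mul, Matrix.transpose_transpose]
    simp only [Matrix.mul_assoc]
    rw [← Matrix.mul_assoc Vᵀ V, hV, Matrix.one_mul]
  have htrMMP : trace (M * Mᵀ * P) = ∑ i : Fin L, aN (i : ℕ) * g i := by
    have h1 : trace (M * Mᵀ * P) = trace ((Sig * Sigᵀ) * (Y * Yᵀ)) := by
      rw [hMMt, hPdef, hY, Matrix.transpose_mul, Matrix.transpose_transpose]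
      rw [Matrix.trace_mul_cycle]
      -- trace (W*Wᵀ * (U * (Sig*Sigᵀ)) * Uᵀ) vs goal; normalize
      rw [Matrix.trace_mul_cycle]
      simp only [← Matrix.mul_assoc]
      rw [Matrix.trace_mul_cycle]
      simp only [← Matrix.mul_assoc]
      rw [Matrix.trace_mul_comm]
      simp only [← Matrix.mul_assoc]
    rw [h1, Matrix.trace]
    apply Finset.sum_congr rfl; intro i _
    rw [Matrix.diag_apply, Matrix.mul_apply]
    have : ∀ k : Fin L, (Sig * Sigᵀ) i k * (Y * Yᵀ) k i
        = if i = k then aN (i : ℕ) * (Y * Yᵀ) k i else 0 := by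
      intro k
      rw [hSigSig i k]
      split_ifs <;> simp
    rw [Finset.sum_congr rfl (fun k _ => this k), Finset.sum_ite_eq Finset.univ i
      (fun k => aN (i : ℕ) * (Y * Yᵀ) k i), if_pos (Finset.mem_univ i), hYY i]
  -- the rearrangement bound
  have hrear := wey_rearrange L r aN haN_anti haN0 haNL g hg0 hg1 hgs
  -- pointwise identity for the target
  have htarget : ∀ i : Fin L, (if (i : ℕ) < K ∧ ¬ (i : ℕ) < r then σ (i : ℕ)^2 else 0)
      = aN (i : ℕ) - (if (i : ℕ) < r then aN (i : ℕ) else 0) := by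
    intro i
    have hiL : (i : ℕ) < L := i.isLt
    simp only [aN, hiL, true_and]
    by_cases h1 : (i : ℕ) < r <;> by_cases h2 : (i : ℕ) < K <;> simp [h1, h2]
  -- the Pythagoras decomposition
  have h1P : (1 - P) * (1 - P) = 1 - P := by
    rw [Matrix.mul_sub, Matrix.mul_one, Matrix.sub_mul, Matrix.one_mul, hPP]
    abel
  have h1Pt : (1 - P)ᵀ = 1 - P := by
    rw [Matrix.transpose_sub, Matrix.transpose_one, hPsymm]
  have hPMC : (1 - P) * (M - C) = (1 - P) * M := by
    rw [Matrix.mul_sub]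
    have : (1 - P) * C = 0 := by
      rw [Matrix.sub_mul, Matrix.one_mul, hPC, sub_self]
    rw [this, sub_zero]
  have htr1 : trace (((1 - P) * (M - C)) * ((1 - P) * (M - C))ᵀ)
      = trace (M * Mᵀ) - trace (M * Mᵀ * P) := by
    rw [hPMC, wey_trace_sandwich, h1Pt, h1P, Matrix.mul_sub, Matrix.mul_one,
      Matrix.trace_sub]
  have htr2 : trace ((M - C) * (M - C)ᵀ)
      = trace (((1 - P) * (M - C)) * ((1 - P) * (M - C))ᵀ)
        + trace ((Wᵀ * (M - C)) * (Wᵀ * (M - C))ᵀ) := by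
    rw [wey_trace_sandwich, wey_trace_sandwich, h1Pt, h1P, Matrix.transpose_transpose,
      ← hPdef, ← Matrix.trace_add, ← Matrix.mul_add, sub_add_cancel, Matrix.mul_one]
  calc ∑ i : Fin L, (if (i : ℕ) < K ∧ ¬ (i : ℕ) < r then σ (i : ℕ)^2 else 0)
      = ∑ i : Fin L, aN (i : ℕ) - ∑ i : Fin L, (if (i : ℕ) < r then aN (i : ℕ) else 0) := by
        rw [← Finset.sum_sub_distrib]
        exact Finset.sum_congr rfl (fun i _ => htarget i)
    _ ≤ ∑ i : Fin L, aN (i : ℕ) - ∑ i : Fin L, aN (i : ℕ) * g i :=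
        sub_le_sub_left hrear _
    _ = trace (M * Mᵀ) - trace (M * Mᵀ * P) := by rw [htrMM, htrMMP]
    _ = trace (((1 - P) * (M - C)) * ((1 - P) * (M - C))ᵀ) := htr1.symm
    _ ≤ trace ((M - C) * (M - C)ᵀ) := by
        rw [htr2]
        exact le_add_of_nonneg_right (wey_trace_gram_nonneg _)

end Core

/-- Weighted Eckart–Young theorem in the `(Q,R)`-norm `‖X‖²_{Q,R} = trace (Q X R Xᵀ)`.
Let `S = Q^{1/2}`, `T = R^{1/2}` be the symmetric positive definite square roots, and let
`S A T = U Σ Vᵀ` be an SVD. Then `A^{(r)}_{Q,R} = S⁻¹ U Σ^{(r)} Vᵀ T⁻¹` satisfies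
`‖A − A^{(r)}_{Q,R}‖_{Q,R} ≤ ‖A − B‖_{Q,R}` for every `B` of rank at most `r`. -/
theorem weighted_eckart_young (L K r : ℕ) (A : Matrix (Fin L) (Fin K) ℝ)
    (Q S : Matrix (Fin L) (Fin L) ℝ) (R T : Matrix (Fin K) (Fin K) ℝ)
    (hQ : Q.PosDef) (hR : R.PosDef) (hS : S.PosDef) (hT : T.PosDef)
    (hSQ : S * S = Q) (hTR : T * T = R)
    (U : Matrix (Fin L) (Fin L) ℝ) (V : Matrix (Fin K) (Fin K) ℝ)
    (hU : Uᵀ * U = 1) (hV : Vᵀ * V = 1)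
    (σ : ℕ → ℝ) (hmono : Antitone σ) (hnonneg : ∀ i, 0 ≤ σ i)
    (hSVD : S * A * T = U * (Matrix.of fun (i : Fin L) (j : Fin K) =>
      if (i : ℕ) = (j : ℕ) then σ (i : ℕ) else 0) * Vᵀ)
    (B : Matrix (Fin L) (Fin K) ℝ) (hB : B.rank ≤ r) :
    Real.sqrt (Matrix.trace
        (Q * (A - S⁻¹ * (U * (Matrix.of fun (i : Fin L) (j : Fin K) =>
            if (i : ℕ) = (j : ℕ) ∧ (i : ℕ) < r then σ (i : ℕ) else 0) * Vᵀ) * T⁻¹) * R *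
          (A - S⁻¹ * (U * (Matrix.of fun (i : Fin L) (j : Fin K) =>
            if (i : ℕ) = (j : ℕ) ∧ (i : ℕ) < r then σ (i : ℕ) else 0) * Vᵀ) * T⁻¹)ᵀ)) ≤
      Real.sqrt (Matrix.trace (Q * (A - B) * R * (A - B)ᵀ)) := by
  classical
  set Sig : Matrix (Fin L) (Fin K) ℝ := Matrix.of fun (i : Fin L) (j : Fin K) =>
    if (i : ℕ) = (j : ℕ) then σ (i : ℕ) else 0 with hSigdef
  set Sigr : Matrix (Fin L) (Fin K) ℝ := Matrix.of fun (i : Fin L) (j : Fin K) =>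
    if (i : ℕ) = (j : ℕ) ∧ (i : ℕ) < r then σ (i : ℕ) else 0 with hSigrdef
  set N : Matrix (Fin L) (Fin K) ℝ := Matrix.of fun (i : Fin L) (j : Fin K) =>
    if (i : ℕ) = (j : ℕ) ∧ ¬ (i : ℕ) < r then σ (i : ℕ) else 0 with hNdef
  set X : Matrix (Fin L) (Fin K) ℝ := A - S⁻¹ * (U * Sigr * Vᵀ) * T⁻¹ with hXdef
  have hSdet : IsUnit S.det := (Matrix.isUnit_iff_isUnit_det S).mp hS.isUnit
  have hTdet : IsUnit T.det := (Matrix.isUnit_iff_isUnit_det T).mp hT.isUnit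
  have hSinv : S * S⁻¹ = 1 := Matrix.mul_nonsing_inv S hSdet
  have hTinv : T⁻¹ * T = 1 := Matrix.nonsing_inv_mul T hTdet
  have hSt : Sᵀ = S := by simpa using hS.isHermitian.eq
  have hTt : Tᵀ = T := by simpa using hT.isHermitian.eq
  -- the weighted norm is the Frobenius norm after conjugation by S, T
  have key : ∀ Z : Matrix (Fin L) (Fin K) ℝ,
      trace (Q * Z * R * Zᵀ) = trace ((S * Z * T) * (S * Z * T)ᵀ) := by
    intro Z
    rw [Matrix.mul_assoc S Z T, wey_trace_sandwich S (Z * T), Matrix.transpose_mul Z T, hSt, hTt,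
      Matrix.trace_mul_comm, ← hSQ, ← hTR]
    simp only [← Matrix.mul_assoc]
    simp only [Matrix.mul_assoc]
    rw [Matrix.trace_mul_comm]
    simp only [← Matrix.mul_assoc]
    simp only [Matrix.mul_assoc]
    rw [Matrix.trace_mul_comm]
    simp only [← Matrix.mul_assoc]
    simp only [Matrix.mul_assoc]
    rw [Matrix.trace_mul_comm]
    simp only [← Matrix.mul_assoc]
  -- compute S X T
  have hXval : S * X * T = U * N * Vᵀ := by
    have h1 : S * (S⁻¹ * (U * Sigr * Vᵀ) * T⁻¹) * T = U * Sigr * Vᵀ := by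
      calc S * (S⁻¹ * (U * Sigr * Vᵀ) * T⁻¹) * T
          = (S * S⁻¹) * (U * Sigr * Vᵀ) * (T⁻¹ * T) := by simp only [Matrix.mul_assoc]
        _ = U * Sigr * Vᵀ := by rw [hSinv, hTinv, Matrix.one_mul, Matrix.mul_one]
    have h2 : Sig - Sigr = N := by
      ext i j
      simp only [Sig, Sigr, N, Matrix.sub_apply, Matrix.of_apply]
      by_cases hij : (i : ℕ) = (j : ℕ) <;> by_cases hir : (i : ℕ) < r <;>
        simp [hij, hir] <;> split_ifs <;> simp_all <;> omega
    calc S * X * T = S * A * T - S * (S⁻¹ * (U * Sigr * Vᵀ) * T⁻¹) * T := by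
          rw [hXdef, Matrix.mul_sub, Matrix.sub_mul]
      _ = U * Sig * Vᵀ - U * Sigr * Vᵀ := by rw [hSVD, h1]
      _ = U * N * Vᵀ := by
          rw [← h2, Matrix.mul_sub, Matrix.sub_mul]
  -- the left-hand side squared
  have hLHS : trace (Q * X * R * Xᵀ)
      = ∑ i : Fin L, (if (i : ℕ) < K ∧ ¬ (i : ℕ) < r then σ (i : ℕ)^2 else 0) := by
    rw [key X, hXval, wey_trace_conj U V hU hV N, wey_trace_gram]
    apply Finset.sum_congr rfl; intro i _
    by_cases hir : (i : ℕ) < r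
    · rw [if_neg (by tauto)]
      apply Finset.sum_eq_zero
      intro j _
      simp [N, hir]
    · have h3 : ∀ j : Fin K, (N i j)^2 = if (i : ℕ) = (j : ℕ) then σ (i : ℕ)^2 else 0 := by
        intro j
        simp only [N, Matrix.of_apply, hir, not_false_iff, and_true]
        split_ifs <;> simp
      rw [Finset.sum_congr rfl (fun j _ => h3 j), wey_sum_diag K (σ (i : ℕ)^2) (i : ℕ)]
      simp [hir]
  -- the right-hand side squared
  have hRHS : trace (Q * (A - B) * R * (A - B)ᵀ)
      = trace ((U * Sig * Vᵀ - S * B * T) * (U * Sig * Vᵀ - S * B * T)ᵀ) := by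
    rw [key (A - B)]
    have : S * (A - B) * T = U * Sig * Vᵀ - S * B * T := by
      rw [Matrix.mul_sub, Matrix.sub_mul, hSVD]
    rw [this]
  have hCr : (S * B * T).rank ≤ r :=
    le_trans (le_trans (Matrix.rank_mul_le_left (S * B) T)
      (Matrix.rank_mul_le_right S B)) hB
  have hcore := wey_core L K r σ hmono hnonneg U V hU hV (S * B * T) hCr
  apply Real.sqrt_le_sqrt
  rw [hLHS, hRHS]
  exact hcore
end

section
/- Let p ∈ ℂ^N satisfy rank H_{L}(p) ≤ r < min(L, N−L+1) for some window length L. Then rank H_{L}(p) = rank H_{r+1}(p); in particular the rank-deficiency of one Hankel window implies the (r+1)-row Hankel matrix of the same sequence has the same rank. -/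
open Matrix Module Submodule LinearMap Finset

private lemma hankel_transpose {N : ℕ} (p : Fin N → ℂ) (L K : ℕ) (h : L + K = N + 1)
    (h' : K + L = N + 1) : (hankel L K h p)ᵀ = hankel K L h' p := by
  ext i j
  show p _ = p _
  congr 1
  exact Fin.ext (Nat.add_comm _ _)

private lemma hankel_rank_comm {N : ℕ} (p : Fin N → ℂ) (L K : ℕ) (h : L + K = N + 1)
    (h' : K + L = N + 1) : (hankel L K h p).rank = (hankel K L h' p).rank := by
  rw [← hankel_transpose p L K h h', Matrix.rank_transpose]

set_option maxHeartbeats 1600000 in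
private lemma keyA {N : ℕ} (p : Fin N → ℂ) (L K L' K' : ℕ)
    (h : L + K = N + 1) (h' : L' + K' = N + 1) (hL' : L' = L + 1) (hL : 1 ≤ L)
    (hrk : (hankel L K h p).rank + 1 ≤ L) :
    (hankel L' K' h' p).rank ≤ (hankel L K h p).rank := by
  subst hL'
  obtain rfl : K = K' + 1 := by omega
  classical
  set f := (hankel L (K' + 1) h p)ᵀ.mulVecLin with hf
  set g := (hankel (L + 1) K' h' p)ᵀ.mulVecLin with hg
  have hrankA : (hankel L (K' + 1) h p).rank = finrank ℂ (LinearMap.range f) := by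
    rw [← Matrix.rank_transpose]; rfl
  have hrankB : (hankel (L + 1) K' h' p).rank = finrank ℂ (LinearMap.range g) := by
    rw [← Matrix.rank_transpose]; rfl
  have hrnf : finrank ℂ (LinearMap.range f) + finrank ℂ (LinearMap.ker f) = L := by
    have := LinearMap.finrank_range_add_finrank_ker f
    rwa [Module.finrank_fin_fun] at this
  have hrng : finrank ℂ (LinearMap.range g) + finrank ℂ (LinearMap.ker g) = L + 1 := by
    have := LinearMap.finrank_range_add_finrank_ker g
    rwa [Module.finrank_fin_fun] at this
  -- kernel membership characterization, with natural-number offset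
  have hf0 : ∀ x ∈ LinearMap.ker f, ∀ (t : ℕ) (ht : t ≤ N - L),
      ∑ j : Fin L, p ⟨j.val + t, by have := j.isLt; omega⟩ * x j = 0 := by
    intro x hx t ht
    have hxa : (hankel L (K' + 1) h p)ᵀ.mulVec x = 0 := by
      rw [hf, ← Matrix.mulVecLin_apply] at *
      exact LinearMap.mem_ker.mp hx
    have := congrFun hxa ⟨t, by omega⟩
    simpa [Matrix.mulVec, dotProduct, hankel, Matrix.transpose_apply] using this
  have hg0 : ∀ x : Fin (L + 1) → ℂ,
      (∀ (t : ℕ) (ht : t + 1 ≤ N - L),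
        ∑ j : Fin (L + 1), p ⟨j.val + t, by have := j.isLt; omega⟩ * x j = 0) →
      x ∈ LinearMap.ker g := by
    intro x hx
    rw [LinearMap.mem_ker, hg, Matrix.mulVecLin_apply]
    funext a
    have := hx a.val (by have := a.isLt; omega)
    simpa [Matrix.mulVec, dotProduct, hankel, Matrix.transpose_apply] using this
  -- nontrivial kernel of f
  have hne : LinearMap.ker f ≠ ⊥ := by
    intro hbot
    rw [hbot, finrank_bot] at hrnf
    omega
  have hex : ∃ b, b ∈ LinearMap.ker f ∧ b ≠ 0 := Submodule.exists_mem_ne_zero_of_ne_bot hne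
  obtain ⟨x₀, hx₀, hx₀ne⟩ := hex
  set D : Finset (Fin L) :=
    Finset.univ.filter (fun j : Fin L => ∃ x, x ∈ LinearMap.ker f ∧ x j ≠ 0) with hD
  have hDne : D.Nonempty := by
    obtain ⟨j, hj⟩ := Function.ne_iff.mp hx₀ne
    exact ⟨j, Finset.mem_filter.2 ⟨Finset.mem_univ _, x₀, hx₀, by simpa using hj⟩⟩
  obtain ⟨-, x₁, hx₁, hx₁d⟩ := Finset.mem_filter.mp (D.max'_mem hDne)
  set d := D.max' hDne with hdd
  have hmax : ∀ y, y ∈ LinearMap.ker f → ∀ j : Fin L, d < j → y j = 0 := by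
    intro y hy j hj
    by_contra hne'
    have hjD : j ∈ D := Finset.mem_filter.2 ⟨Finset.mem_univ _, y, hy, hne'⟩
    exact absurd (D.le_max' j hjD) (not_le.2 hj)
  -- padding linear map
  let padL : (Fin L → ℂ) →ₗ[ℂ] (Fin (L + 1) → ℂ) :=
    { toFun := fun x => Fin.snoc x 0
      map_add' := by
        intro x y; funext j
        cases j using Fin.lastCases with
        | last => simp
        | cast i => simp
      map_smul' := by
        intro c x; funext j
        cases j using Fin.lastCases with
        | last => simp
        | cast i => simp }
  have hpad_apply : ∀ (x : Fin L → ℂ), padL x = Fin.snoc x 0 := fun _ => rfl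
  have hpadinj : Function.Injective padL := by
    intro x y hxy
    funext j
    have := congrFun hxy j.castSucc
    simpa [hpad_apply] using this
  have hpad_mem : ∀ x, x ∈ LinearMap.ker f → padL x ∈ LinearMap.ker g := by
    intro x hx
    apply hg0
    intro t ht
    have heq : ∑ j : Fin (L + 1), p ⟨j.val + t, by have := j.isLt; omega⟩ * (padL x) j
        = ∑ j : Fin L, p ⟨j.val + t, by have := j.isLt; omega⟩ * x j := by
      rw [Fin.sum_univ_castSucc]
      simp [hpad_apply]
    rw [heq]
    exact hf0 x hx t (by omega)
  -- shifted top element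
  set v : Fin (L + 1) → ℂ := Fin.cons 0 x₁ with hv
  have hv_mem : v ∈ LinearMap.ker g := by
    apply hg0
    intro t ht
    rw [Fin.sum_univ_succ]
    have heq : ∑ j : Fin L, p ⟨(Fin.succ j).val + t, by have := j.isLt; omega⟩ * v (Fin.succ j)
        = ∑ j : Fin L, p ⟨j.val + (t + 1), by have := j.isLt; omega⟩ * x₁ j := by
      refine Finset.sum_congr rfl fun j _ => ?_
      have h1 : v (Fin.succ j) = x₁ j := by simp [hv]
      rw [h1]
      congr 1
      exact congrArg p (Fin.ext (by simp [Fin.val_succ]; omega))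
    rw [heq]
    simp only [hv, Fin.cons_zero, mul_zero, zero_add]
    exact hf0 x₁ hx₁ (t + 1) (by omega)
  have hv_not : v ∉ (LinearMap.ker f).map padL := by
    rintro ⟨y, hy, hyeq⟩
    have h1 : padL y d.succ = 0 := by
      by_cases hdL : d.val + 1 < L
      · have h2 : d.succ = Fin.castSucc ⟨d.val + 1, hdL⟩ := Fin.ext (by simp)
        rw [hpad_apply, h2, Fin.snoc_castSucc]
        exact hmax y hy ⟨d.val + 1, hdL⟩ (by simp [Fin.lt_def])
      · have hdlt := d.isLt
        have h2 : d.succ = Fin.last L := Fin.ext (by simp [Fin.val_succ, Fin.val_last]; omega)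
        rw [hpad_apply, h2, Fin.snoc_last]
    have h2 : v d.succ = x₁ d := by simp [hv]
    rw [hyeq] at h1
    rw [h1] at h2
    exact hx₁d h2.symm
  set W := (LinearMap.ker f).map padL ⊔ (ℂ ∙ v) with hW
  have hWker : W ≤ LinearMap.ker g := by
    refine sup_le ?_ ?_
    · rintro z ⟨y, hy, rfl⟩
      exact hpad_mem y hy
    · rw [Submodule.span_singleton_le_iff_mem]
      exact hv_mem
  have hvW : v ∈ W := Submodule.mem_sup_right (Submodule.mem_span_singleton_self v)
  have hlt : (LinearMap.ker f).map padL < W := by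
    refine lt_of_le_of_ne le_sup_left fun hEq => hv_not ?_
    rw [hEq]; exact hvW
  have e1 : finrank ℂ (LinearMap.ker f) = finrank ℂ ((LinearMap.ker f).map padL) :=
    LinearEquiv.finrank_eq (Submodule.equivMapOfInjective padL hpadinj (LinearMap.ker f))
  have hfr : finrank ℂ ((LinearMap.ker f).map padL) < finrank ℂ W :=
    Submodule.finrank_lt_finrank_of_lt hlt
  have hWg : finrank ℂ W ≤ finrank ℂ (LinearMap.ker g) := Submodule.finrank_mono hWker
  omega

private lemma keyB {N : ℕ} (p : Fin N → ℂ) (L K L' K' : ℕ)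
    (h : L + K = N + 1) (h' : L' + K' = N + 1) (hL' : L = L' + 1) (hL : 1 ≤ L')
    (hrk : (hankel L K h p).rank + 1 ≤ K) :
    (hankel L' K' h' p).rank ≤ (hankel L K h p).rank := by
  rw [hankel_rank_comm p L K h (by omega), hankel_rank_comm p L' K' h' (by omega)]
  refine keyA p K L K' L' (by omega) (by omega) (by omega) (by omega) ?_
  rw [← hankel_rank_comm p L K h (by omega)]
  exact hrk

set_option maxHeartbeats 1600000 in
private lemma aux {N L r : ℕ} (hL : L ≤ N) (hr1 : r < L) (hr2 : r < N + 1 - L)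
    (h0 : L + (N + 1 - L) = N + 1)
    (p : Fin N → ℂ) (hrk : (hankel L (N + 1 - L) h0 p).rank ≤ r) :
    ∀ k m K (h1 : r + 1 ≤ m) (h2 : m ≤ L) (h3 : m + K = N + 1) (h4 : L - m ≤ k),
      (hankel m K h3 p).rank = (hankel L (N + 1 - L) h0 p).rank := by
  intro k
  induction k with
  | zero =>
    intro m K h1 h2 h3 h4
    obtain rfl : K = N + 1 - L := by omega
    obtain rfl : m = L := by omega
    rfl
  | succ k ih =>
    intro m K h1 h2 h3 h4
    by_cases hk : L - m ≤ k
    · exact ih m K h1 h2 h3 hk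
    · have hmL : m < L := by omega
      obtain ⟨K₁, rfl⟩ : ∃ K₁, K = K₁ + 1 := ⟨K - 1, by omega⟩
      have hrec := ih (m + 1) K₁ (by omega) (by omega) (by omega) (by omega)
      have hrL : (hankel (m + 1) K₁ (by omega) p).rank ≤ r := by rw [hrec]; exact hrk
      have hs1 : (hankel m (K₁ + 1) h3 p).rank ≤ (hankel (m + 1) K₁ (by omega) p).rank := by
        refine keyB p (m + 1) K₁ m (K₁ + 1) (by omega) h3 rfl (by omega) ?_
        omega
      have hs2 : (hankel (m + 1) K₁ (by omega) p).rank ≤ (hankel m (K₁ + 1) h3 p).rank := by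
        refine keyA p m (K₁ + 1) (m + 1) K₁ h3 (by omega) rfl (by omega) ?_
        omega
      rw [← hrec]
      exact le_antisymm hs1 hs2

/-- If `p ∈ ℂ^N` satisfies `rank H_L(p) ≤ r < min (L, N − L + 1)` for some window length
`L`, then `rank H_L(p) = rank H_{r+1}(p)`: rank-deficiency of one Hankel window implies
the `(r+1)`-row Hankel matrix of the same sequence has the same rank. -/
theorem rank_deficient_hankel_rank_eq (N L r : ℕ) (hL : L ≤ N)
    (hr1 : r < L) (hr2 : r < N + 1 - L) (p : Fin N → ℂ)
    (hrk : (hankel L (N + 1 - L) (by omega) p).rank ≤ r) :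
    (hankel L (N + 1 - L) (by omega) p).rank =
      (hankel (r + 1) (N - r) (by omega) p).rank := by
  exact (aux hL hr1 hr2 (by omega) p hrk (L - (r + 1)) (r + 1) (N - r) le_rfl (by omega) (by omega)
    le_rfl).symm
end
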